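/- Let L̂ be a finite atomic lattice, M(L) its minimal squarefree ideal, and for incomparable k', k ∈ mi(L) let M̄ be the image of M(L) in k[L]/(x_{k'} − x_k). Then LCM(M̄) ≇ L̂. Conversely, if k' and k are comparable then LCM(M̄) ≅ L̂. -/

import Mathlib

open scoped Classical

noncomputable section

/-- Meet-irreducible proper elements of a bounded lattice. -/
def MeetIrred (L : Type*) [Lattice L] [BoundedOrder L] : Set L :=
  {l | l ≠ ⊥ ∧ l ≠ ⊤ ∧ ∀ a b : L, l = a ⊓ b → l = a ∨ l = b}

/-- The exponent vector of the image of the generator `x(a)` of `M(L)` after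
identifying the variable `x_{k₁}` with `x_{k₀}` (i.e. in `k[L]/(x_{k₁} − x_{k₀})`):
the variable `x_{k₀}` acquires the sum of the old exponents at `k₀` and `k₁`,
the variable `x_{k₁}` is no longer used, and all other exponents are unchanged. -/
def mergeExpo {L : Type*} [CompleteLattice L] [Fintype L]
    (k₀ k₁ : ↥(MeetIrred L)) (a : L) : ↥(MeetIrred L) → ℕ := fun l =>
  if l = k₁ then 0
  else if l = k₀ then
    (if a ≤ (k₀ : L) then 0 else 1) + (if a ≤ (k₁ : L) then 0 else 1)
  else if a ≤ (l : L) then 0 else 1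

set_option linter.unusedSectionVars false
namespace Stmt19Aux

variable {L : Type*} [CompleteLattice L] [Fintype L]

lemma mem_of_eq_inf {k : L} (hk : k ∈ MeetIrred L) :
    ∀ s : Finset L, k = s.inf id → k ∈ s := by
  intro s
  induction s using Finset.induction_on with
  | empty => intro h; rw [Finset.inf_empty] at h; exact absurd h hk.2.1
  | insert _ _ ha ih =>
      intro h
      rw [Finset.inf_insert, id_eq] at h
      rcases hk.2.2 _ _ h with h1 | h2
      · rw [h1]; exact Finset.mem_insert_self _ _
      · exact Finset.mem_insert_of_mem (ih h2)

/-- the unique cover of a meet-irreducible element -/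
def coverOf (k : L) : L := sInf {u | k < u}

lemma lt_coverOf {k : L} (hk : k ∈ MeetIrred L) : k < coverOf k := by
  have hle : k ≤ coverOf k := le_sInf fun u hu => hu.le
  refine hle.lt_of_ne fun h => ?_
  have hfin : coverOf k = ({u | k < u}.toFinset).inf id := by
    rw [Finset.inf_id_eq_sInf, Set.coe_toFinset]; rfl
  have := mem_of_eq_inf hk _ (h.trans hfin)
  rw [Set.mem_toFinset] at this
  exact lt_irrefl _ this

lemma coverOf_le {k z : L} (h : k < z) : coverOf k ≤ z := sInf_le h

variable [IsAtomistic L]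

lemma exists_atom_le' {c : L} (hc : c ≠ ⊥) : ∃ a : L, IsAtom a ∧ a ≤ c := by
  by_contra h
  push_neg at h
  have h2 : {a : L | IsAtom a ∧ a ≤ c} = ∅ := by
    ext a; simp only [Set.mem_setOf_eq, Set.mem_empty_iff_false, iff_false, not_and]
    exact h a
  have := sSup_atoms_le_eq c
  rw [h2, sSup_empty] at this
  exact hc this.symm

lemma exists_atom_not_le {c : L} (hc : c ≠ ⊤) : ∃ a : L, IsAtom a ∧ ¬ a ≤ c := by
  by_contra h
  push_neg at h
  have : (⊤ : L) ≤ c := by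
    conv_lhs => rw [← sSup_atoms_le_eq (⊤ : L)]
    exact sSup_le fun a ha => h a ha.1
  exact hc (top_unique this)

lemma exists_two_atoms {k : L} (hk : k ∈ MeetIrred L) :
    ∃ a b : L, IsAtom a ∧ IsAtom b ∧ a ≠ b := by
  obtain ⟨a, ha, hak⟩ := exists_atom_le' hk.1
  obtain ⟨b, hb, hbk⟩ := exists_atom_not_le hk.2.1
  exact ⟨a, b, ha, hb, fun h => hbk (h ▸ hak)⟩

lemma eq_sInf_meetIrred (hex : ∃ k, k ∈ MeetIrred L) (x : L) :
    x = sInf {l | l ∈ MeetIrred L ∧ x ≤ l} := by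
  obtain ⟨kw, hkw⟩ := hex
  obtain ⟨a0, b0, ha0, hb0, hab0⟩ := exists_two_atoms hkw
  induction x using WellFounded.induction (IsWellFounded.wf (r := ((· > ·) : L → L → Prop))) with
  | _ x IH =>
  have hub : x ≤ sInf {l | l ∈ MeetIrred L ∧ x ≤ l} := le_sInf fun l hl => hl.2
  refine le_antisymm hub ?_
  by_cases hmi : x ∈ MeetIrred L
  · exact sInf_le ⟨hmi, le_rfl⟩
  by_cases htop : x = ⊤
  · subst htop; exact le_top
  have key : ∃ a b : L, x = a ⊓ b ∧ x ≠ a ∧ x ≠ b := by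
    by_cases hbot : x = ⊥
    · subst hbot
      refine ⟨a0, b0, ?_, ?_, ?_⟩
      · have h1 : a0 ⊓ b0 < a0 := by
          rcases lt_or_eq_of_le (inf_le_left : a0 ⊓ b0 ≤ a0) with h | h
          · exact h
          · exfalso
            have hle : a0 ≤ b0 := by rw [← h]; exact inf_le_right
            rcases (hb0.le_iff.1 hle) with h' | h'
            · exact ha0.1 h'
            · exact hab0 h'
        exact (ha0.2 _ h1).symm
      · exact fun h => ha0.1 h.symm
      · exact fun h => hb0.1 h.symm
    · simp only [MeetIrred, Set.mem_setOf_eq, not_and] at hmi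
      have := hmi hbot htop
      push_neg at this
      obtain ⟨a, b, h1, h2, h3⟩ := this
      exact ⟨a, b, h1, h2, h3⟩
  obtain ⟨a, b, hab, hxa, hxb⟩ := key
  have hxla : x < a := lt_of_le_of_ne (hab ▸ inf_le_left) hxa
  have hxlb : x < b := lt_of_le_of_ne (hab ▸ inf_le_right) hxb
  have ia := IH a hxla
  have ib := IH b hxlb
  have hsa : sInf {l | l ∈ MeetIrred L ∧ x ≤ l} ≤ a := by
    rw [ia]
    exact sInf_le_sInf fun l hl => ⟨hl.1, hxla.le.trans hl.2⟩
  have hsb : sInf {l | l ∈ MeetIrred L ∧ x ≤ l} ≤ b := by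
    rw [ib]
    exact sInf_le_sInf fun l hl => ⟨hl.1, hxlb.le.trans hl.2⟩
  exact le_trans (le_inf hsa hsb) hab.ge


section Merge

variable (k₀ k₁ : ↥(MeetIrred L))

/-- the merged exponent at the distinguished coordinate -/
def f01 (a : L) : ℕ := (if a ≤ (k₀ : L) then 0 else 1) + (if a ≤ (k₁ : L) then 0 else 1)

lemma merge_apply_k1 (a : L) : mergeExpo k₀ k₁ a k₁ = 0 := by simp [mergeExpo]

lemma merge_apply_k0 (hne : k₀ ≠ k₁) (a : L) :
    mergeExpo k₀ k₁ a k₀ = f01 k₀ k₁ a := by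
  simp [mergeExpo, f01, hne]

lemma merge_apply_other {l : ↥(MeetIrred L)} (h1 : l ≠ k₁) (h0 : l ≠ k₀) (a : L) :
    mergeExpo k₀ k₁ a l = if a ≤ (l : L) then 0 else 1 := by
  simp [mergeExpo, h1, h0]

lemma merge_le_two (a : L) (l : ↥(MeetIrred L)) : mergeExpo k₀ k₁ a l ≤ 2 := by
  unfold mergeExpo; split_ifs <;> omega

lemma merge_le_one {l : ↥(MeetIrred L)} (h0 : l ≠ k₀) (a : L) :
    mergeExpo k₀ k₁ a l ≤ 1 := by
  unfold mergeExpo; split_ifs <;> omega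

lemma sup_coord (T : Finset L) (l : ↥(MeetIrred L)) :
    (T.sup (mergeExpo k₀ k₁)) l = T.sup (fun a => mergeExpo k₀ k₁ a l) :=
  Finset.sup_apply T (mergeExpo k₀ k₁) l

lemma sup_ind (T : Finset L) (c : L) :
    T.sup (fun a => if a ≤ c then 0 else 1) = if T.sup id ≤ c then 0 else 1 := by
  by_cases h : T.sup id ≤ c
  · rw [if_pos h]
    refine Nat.le_antisymm (Finset.sup_le fun a ha => ?_) (Nat.zero_le _)
    have haa : a ≤ c := le_trans (Finset.le_sup (f := id) ha) h
    rw [if_pos haa]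
  · rw [if_neg h]
    obtain ⟨a, ha, hac⟩ : ∃ a ∈ T, ¬ a ≤ c := by
      by_contra hh; push_neg at hh
      exact h (Finset.sup_le fun b hb => hh b hb)
    refine Nat.le_antisymm (Finset.sup_le fun b _ => ?_) ?_
    · split_ifs <;> omega
    · have := Finset.le_sup (f := fun a : L => if a ≤ c then 0 else 1) ha
      simpa only [if_neg hac] using this
  
lemma sup_f01_of_cmp (hcmp : (k₀ : L) ≤ k₁ ∨ (k₁ : L) ≤ k₀) (T : Finset L) :
    T.sup (f01 k₀ k₁) = f01 k₀ k₁ (T.sup id) := by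
  have hmem : ∀ a ∈ T, a ≤ T.sup id := fun a ha => Finset.le_sup (f := id) ha
  rcases hcmp with hc | hc
  · by_cases h0 : T.sup id ≤ (k₀ : L)
    · have h1 : T.sup id ≤ (k₁ : L) := h0.trans hc
      rw [f01, if_pos h0, if_pos h1]
      refine Nat.le_antisymm (Finset.sup_le fun a ha => ?_) (Nat.zero_le _)
      rw [f01, if_pos ((hmem a ha).trans h0), if_pos ((hmem a ha).trans h1)]
    · by_cases h1 : T.sup id ≤ (k₁ : L)
      · rw [f01, if_neg h0, if_pos h1]
        obtain ⟨a, ha, hac⟩ : ∃ a ∈ T, ¬ a ≤ (k₀ : L) := by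
          by_contra hh; push_neg at hh
          exact h0 (Finset.sup_le fun b hb => hh b hb)
        refine Nat.le_antisymm (Finset.sup_le fun b hb => ?_) ?_
        · rw [f01, if_pos ((hmem b hb).trans h1)]; split_ifs <;> omega
        · have := Finset.le_sup (f := f01 k₀ k₁) ha
          simpa only [f01, if_neg hac, if_pos ((hmem a ha).trans h1)] using this
      · rw [f01, if_neg h0, if_neg h1]
        obtain ⟨a, ha, hac⟩ : ∃ a ∈ T, ¬ a ≤ (k₁ : L) := by
          by_contra hh; push_neg at hh
          exact h1 (Finset.sup_le fun b hb => hh b hb)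
        have hac0 : ¬ a ≤ (k₀ : L) := fun hh => hac (hh.trans hc)
        refine Nat.le_antisymm (Finset.sup_le fun b _ => ?_) ?_
        · unfold f01; split_ifs <;> omega
        · have := Finset.le_sup (f := f01 k₀ k₁) ha
          simpa only [f01, if_neg hac, if_neg hac0] using this
  · by_cases h1 : T.sup id ≤ (k₁ : L)
    · have h0 : T.sup id ≤ (k₀ : L) := h1.trans hc
      rw [f01, if_pos h0, if_pos h1]
      refine Nat.le_antisymm (Finset.sup_le fun a ha => ?_) (Nat.zero_le _)
      rw [f01, if_pos ((hmem a ha).trans h0), if_pos ((hmem a ha).trans h1)]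
    · by_cases h0 : T.sup id ≤ (k₀ : L)
      · rw [f01, if_pos h0, if_neg h1]
        obtain ⟨a, ha, hac⟩ : ∃ a ∈ T, ¬ a ≤ (k₁ : L) := by
          by_contra hh; push_neg at hh
          exact h1 (Finset.sup_le fun b hb => hh b hb)
        refine Nat.le_antisymm (Finset.sup_le fun b hb => ?_) ?_
        · rw [f01, if_pos ((hmem b hb).trans h0)]; split_ifs <;> omega
        · have := Finset.le_sup (f := f01 k₀ k₁) ha
          simpa only [f01, if_neg hac, if_pos ((hmem a ha).trans h0)] using this
      · rw [f01, if_neg h0, if_neg h1]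
        obtain ⟨a, ha, hac⟩ : ∃ a ∈ T, ¬ a ≤ (k₀ : L) := by
          by_contra hh; push_neg at hh
          exact h0 (Finset.sup_le fun b hb => hh b hb)
        have hac1 : ¬ a ≤ (k₁ : L) := fun hh => hac (hh.trans hc)
        refine Nat.le_antisymm (Finset.sup_le fun b _ => ?_) ?_
        · unfold f01; split_ifs <;> omega
        · have := Finset.le_sup (f := f01 k₀ k₁) ha
          simpa only [f01, if_neg hac1, if_neg hac] using this

end Merge


section Main

variable (k₀ k₁ : ↥(MeetIrred L))

/-- the image set of the merged monomial ideal generators -/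
abbrev Sset : Set (↥(MeetIrred L) → ℕ) :=
  {w : ↥(MeetIrred L) → ℕ | ∃ T : Finset L, (∀ a ∈ T, IsAtom a) ∧
    w = T.sup (mergeExpo k₀ k₁)}

/-- the candidate isomorphism in the comparable case -/
def phiF (x : L) : ↥(MeetIrred L) → ℕ := fun l =>
  if l = k₁ then 0
  else if l = k₀ then f01 k₀ k₁ x
  else if x ≤ (l : L) then 0 else 1

lemma phiF_sup (hne : k₀ ≠ k₁) (hcmp : (k₀ : L) ≤ k₁ ∨ (k₁ : L) ≤ k₀) (T : Finset L) :
    phiF k₀ k₁ (T.sup id) = T.sup (mergeExpo k₀ k₁) := by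
  funext l
  rw [sup_coord]
  by_cases h1 : l = k₁
  · have e1 : phiF k₀ k₁ (T.sup id) l = 0 := by simp [phiF, h1]
    rw [e1]
    refine (Nat.le_antisymm (Finset.sup_le fun a _ => ?_) (Nat.zero_le _)).symm
    rw [h1, merge_apply_k1]
  by_cases h0 : l = k₀
  · have e1 : phiF k₀ k₁ (T.sup id) l = f01 k₀ k₁ (T.sup id) := by
      simp only [phiF]
      rw [if_neg h1, if_pos h0]
    rw [e1, show (T.sup fun a => mergeExpo k₀ k₁ a l) = T.sup (f01 k₀ k₁) from
      Finset.sup_congr rfl fun a _ => by rw [h0, merge_apply_k0 k₀ k₁ hne a]]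
    exact (sup_f01_of_cmp k₀ k₁ hcmp T).symm
  · have e1 : phiF k₀ k₁ (T.sup id) l =
        (if T.sup id ≤ (l : L) then 0 else 1) := by simp [phiF, h1, h0]
    rw [e1, show (T.sup fun a => mergeExpo k₀ k₁ a l) =
        T.sup (fun a => if a ≤ (l : L) then 0 else 1) from
      Finset.sup_congr rfl fun a _ => merge_apply_other k₀ k₁ h1 h0 a]
    exact (sup_ind T (l : L)).symm

lemma indic_mono {x y c : L} (h : x ≤ y) :
    (if x ≤ c then 0 else 1) ≤ (if y ≤ c then (0:ℕ) else 1) := by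
  by_cases hy : y ≤ c
  · rw [if_pos (h.trans hy), if_pos hy]
  · split_ifs <;> omega

lemma phiF_mono : Monotone (phiF k₀ k₁) := by
  intro x y h l
  unfold phiF
  by_cases h1 : l = k₁
  · simp [h1]
  by_cases h0 : l = k₀
  · simp only [if_neg h1, if_pos h0, f01]
    exact Nat.add_le_add (indic_mono h) (indic_mono h)
  · simp only [if_neg h1, if_neg h0]
    exact indic_mono h

lemma indic_eq_zero {x c : L} (h : (if x ≤ c then (0:ℕ) else 1) = 0) : x ≤ c := by
  by_contra hh; rw [if_neg hh] at h; omega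

lemma f01_eq_two {x : L} (h0 : ¬ x ≤ (k₀ : L)) (h1 : ¬ x ≤ (k₁ : L)) :
    f01 k₀ k₁ x = 2 := by simp only [f01, if_neg h0, if_neg h1]

lemma f01_le_one_left {x : L} (h0 : x ≤ (k₀ : L)) : f01 k₀ k₁ x ≤ 1 := by
  simp only [f01, if_pos h0]; split_ifs <;> omega

lemma f01_le_one_right {x : L} (h1 : x ≤ (k₁ : L)) : f01 k₀ k₁ x ≤ 1 := by
  simp only [f01, if_pos h1]; split_ifs <;> omega

lemma f01_eq_zero {x : L} (h0 : x ≤ (k₀ : L)) (h1 : x ≤ (k₁ : L)) :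
    f01 k₀ k₁ x = 0 := by simp only [f01, if_pos h0, if_pos h1]

lemma le_of_f01_eq_zero {x : L} (h : f01 k₀ k₁ x = 0) :
    x ≤ (k₀ : L) ∧ x ≤ (k₁ : L) := by
  simp only [f01] at h
  have h2 := Nat.add_eq_zero.1 h
  exact ⟨indic_eq_zero h2.1, indic_eq_zero h2.2⟩

lemma phiF_le (hne : k₀ ≠ k₁) (hcmp : (k₀ : L) ≤ k₁ ∨ (k₁ : L) ≤ k₀) {x y : L}
    (h : phiF k₀ k₁ x ≤ phiF k₀ k₁ y) : x ≤ y := by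
  have hrep := eq_sInf_meetIrred ⟨(k₀ : L), k₀.2⟩ y
  rw [hrep]
  refine le_sInf fun l hl => ?_
  obtain ⟨hlmi, hyl⟩ := hl
  set l' : ↥(MeetIrred L) := ⟨l, hlmi⟩ with hl'
  have hcoord := h k₀
  have hk0 : phiF k₀ k₁ x k₀ = f01 k₀ k₁ x := by simp [phiF, hne]
  have hk0y : phiF k₀ k₁ y k₀ = f01 k₀ k₁ y := by simp [phiF, hne]
  rw [hk0, hk0y] at hcoord
  have hgoal : (x ≤ (l' : L)) → x ≤ l := fun hh => hh
  apply hgoal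
  have hyl' : y ≤ (l' : L) := hyl
  by_cases h1 : l' = k₁
  · rw [h1] at hyl' ⊢
    rcases hcmp with hc | hc
    · by_contra hx1
      have hx0 : ¬ x ≤ (k₀ : L) := fun hh => hx1 (hh.trans hc)
      have h2 := f01_eq_two k₀ k₁ hx0 hx1
      have h3 := f01_le_one_right k₀ k₁ hyl'
      have hfalse : (2:ℕ) ≤ 1 := le_trans (le_trans h2.ge hcoord) h3
      omega
    · have hyk0 : y ≤ (k₀ : L) := hyl'.trans hc
      have h3 := f01_eq_zero k₀ k₁ hyk0 hyl'
      rw [h3, Nat.le_zero] at hcoord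
      exact (le_of_f01_eq_zero k₀ k₁ hcoord).2
  by_cases h0 : l' = k₀
  · rw [h0] at hyl' ⊢
    rcases hcmp with hc | hc
    · have hyk1 : y ≤ (k₁ : L) := hyl'.trans hc
      have h3 := f01_eq_zero k₀ k₁ hyl' hyk1
      rw [h3, Nat.le_zero] at hcoord
      exact (le_of_f01_eq_zero k₀ k₁ hcoord).1
    · by_contra hx0
      have hx1 : ¬ x ≤ (k₁ : L) := fun hh => hx0 (hh.trans hc)
      have h2 := f01_eq_two k₀ k₁ hx0 hx1
      have h3 := f01_le_one_left k₀ k₁ hyl'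
      have hfalse : (2:ℕ) ≤ 1 := le_trans (le_trans h2.ge hcoord) h3
      omega
  · have hc2 := h l'
    have e1 : phiF k₀ k₁ y l' = 0 := by
      simp only [phiF, if_neg h1, if_neg h0]
      rw [if_pos hyl']
    rw [e1, Nat.le_zero] at hc2
    simp only [phiF, if_neg h1, if_neg h0] at hc2
    exact indic_eq_zero hc2

/-- the set of atoms below `c`, as a finset -/
def EA (c : L) : Finset L := Finset.univ.filter (fun a => IsAtom a ∧ a ≤ c)

lemma EA_sup_id (c : L) : (EA c).sup id = c := by
  rw [Finset.sup_id_eq_sSup]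
  have : ↑(EA c) = {a : L | IsAtom a ∧ a ≤ c} := by
    ext a; simp [EA]
  rw [this, sSup_atoms_le_eq]

lemma phiF_mem (hne : k₀ ≠ k₁) (hcmp : (k₀ : L) ≤ k₁ ∨ (k₁ : L) ≤ k₀) (x : L) :
    phiF k₀ k₁ x ∈ Sset k₀ k₁ := by
  refine ⟨EA x, fun a ha => ((Finset.mem_filter.1 ha).2).1, ?_⟩
  conv_lhs => rw [← EA_sup_id x]
  exact phiF_sup k₀ k₁ hne hcmp (EA x)

lemma forward (hne : k₀ ≠ k₁) (hcmp : (k₀ : L) ≤ k₁ ∨ (k₁ : L) ≤ k₀) :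
    Nonempty (L ≃o ↥(Sset k₀ k₁)) := by
  set g : L → ↥(Sset k₀ k₁) := fun x => ⟨phiF k₀ k₁ x, phiF_mem k₀ k₁ hne hcmp x⟩ with hg
  have hbij : Function.Bijective g := by
    constructor
    · intro x y h
      have h' : phiF k₀ k₁ x = phiF k₀ k₁ y := congrArg Subtype.val h
      exact le_antisymm (phiF_le k₀ k₁ hne hcmp h'.le) (phiF_le k₀ k₁ hne hcmp h'.ge)
    · rintro ⟨w, T, hT, rfl⟩
      exact ⟨T.sup id, Subtype.ext (phiF_sup k₀ k₁ hne hcmp T)⟩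
  exact ⟨{ toEquiv := Equiv.ofBijective g hbij,
           map_rel_iff' := by
             intro a b
             show g a ≤ g b ↔ a ≤ b
             rw [hg]
             constructor
             · intro h
               exact phiF_le k₀ k₁ hne hcmp h
             · intro h
               exact phiF_mono k₀ k₁ h }⟩


/-! ### Backward direction -/

def T2 : Finset L :=
  Finset.univ.filter (fun a => IsAtom a ∧ (a ≤ (k₀ : L) ∨ a ≤ (k₁ : L)))

def etaL (c : L) : ↥(MeetIrred L) → ℕ := (EA c).sup (mergeExpo k₀ k₁)

def XX : ↥(MeetIrred L) → ℕ := etaL k₀ k₁ ((k₀ : L) ⊓ (k₁ : L))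

def YY : ↥(MeetIrred L) → ℕ := (T2 k₀ k₁).sup (mergeExpo k₀ k₁)

lemma etaL_mem (c : L) : etaL k₀ k₁ c ∈ Sset k₀ k₁ :=
  ⟨EA c, fun a ha => (Finset.mem_filter.1 ha).2.1, rfl⟩

lemma YY_mem : YY k₀ k₁ ∈ Sset k₀ k₁ :=
  ⟨T2 k₀ k₁, fun a ha => (Finset.mem_filter.1 ha).2.1, rfl⟩

lemma etaL_mono {c c' : L} (h : c ≤ c') : etaL k₀ k₁ c ≤ etaL k₀ k₁ c' := by
  refine Finset.sup_mono fun a ha => ?_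
  have h2 := Finset.mem_filter.1 ha
  exact Finset.mem_filter.2 ⟨Finset.mem_univ a, h2.2.1, h2.2.2.trans h⟩

lemma EA_subset_T2_left {c : L} (h : c ≤ (k₀ : L)) : EA c ⊆ T2 k₀ k₁ := by
  intro a ha
  have h2 := Finset.mem_filter.1 ha
  exact Finset.mem_filter.2 ⟨Finset.mem_univ a, h2.2.1, Or.inl (h2.2.2.trans h)⟩

lemma EA_subset_T2_right {c : L} (h : c ≤ (k₁ : L)) : EA c ⊆ T2 k₀ k₁ := by
  intro a ha
  have h2 := Finset.mem_filter.1 ha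
  exact Finset.mem_filter.2 ⟨Finset.mem_univ a, h2.2.1, Or.inr (h2.2.2.trans h)⟩

lemma T2_subset_EA {c : L} (h0 : (k₀ : L) ≤ c) (h1 : (k₁ : L) ≤ c) :
    T2 k₀ k₁ ⊆ EA c := by
  intro a ha
  have h2 := Finset.mem_filter.1 ha
  refine Finset.mem_filter.2 ⟨Finset.mem_univ a, h2.2.1, ?_⟩
  rcases h2.2.2 with h | h
  · exact h.trans h0
  · exact h.trans h1

lemma XX_le_YY : XX k₀ k₁ ≤ YY k₀ k₁ :=
  Finset.sup_mono (EA_subset_T2_left k₀ k₁ inf_le_left)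

lemma coord_k1_zero {w : ↥(MeetIrred L) → ℕ} (hw : w ∈ Sset k₀ k₁) : w k₁ = 0 := by
  obtain ⟨T, hT, rfl⟩ := hw
  rw [sup_coord]
  refine Nat.le_antisymm (Finset.sup_le fun a _ => ?_) (Nat.zero_le _)
  rw [merge_apply_k1]

lemma coord_le_one {w : ↥(MeetIrred L) → ℕ} {l : ↥(MeetIrred L)} (hl : l ≠ k₀)
    (hw : w ∈ Sset k₀ k₁) : w l ≤ 1 := by
  obtain ⟨T, hT, rfl⟩ := hw
  rw [sup_coord]
  exact Finset.sup_le fun a _ => merge_le_one k₀ k₁ hl a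

lemma coord_le_two {w : ↥(MeetIrred L) → ℕ} (hw : w ∈ Sset k₀ k₁)
    (l : ↥(MeetIrred L)) : w l ≤ 2 := by
  obtain ⟨T, hT, rfl⟩ := hw
  rw [sup_coord]
  exact Finset.sup_le fun a _ => merge_le_two k₀ k₁ a l

lemma f01_lt_one_iff (a : L) :
    f01 k₀ k₁ a < 1 ↔ a ≤ (k₀ : L) ⊓ (k₁ : L) := by
  rw [le_inf_iff]
  constructor
  · intro h
    exact le_of_f01_eq_zero k₀ k₁ (by omega)
  · intro h
    rw [f01_eq_zero k₀ k₁ h.1 h.2]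
    omega

lemma f01_lt_two_iff (a : L) :
    f01 k₀ k₁ a < 2 ↔ (a ≤ (k₀ : L) ∨ a ≤ (k₁ : L)) := by
  constructor
  · intro h
    by_contra hc
    push_neg at hc
    rw [f01_eq_two k₀ k₁ hc.1 hc.2] at h
    omega
  · intro h
    rcases h with h | h
    · have := f01_le_one_left k₀ k₁ h
      omega
    · have := f01_le_one_right k₀ k₁ h
      omega

def DD : Finset ↥(MeetIrred L) := Finset.univ \ {k₀, k₁}

def Mset : Finset (↥(MeetIrred L) → ℕ) :=
  (DD k₀ k₁).image (fun l : ↥(MeetIrred L) => etaL k₀ k₁ (l : L)) ∪ {XX k₀ k₁, YY k₀ k₁}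

lemma stepA (hne : k₀ ≠ k₁) (θ : L ≃o ↥(Sset k₀ k₁)) (k : ↥(MeetIrred L)) :
    ((θ (k : L)) : ↥(MeetIrred L) → ℕ) ∈ Mset k₀ k₁ := by
  set v1 : ↥(MeetIrred L) → ℕ := ((θ (k : L)) : ↥(MeetIrred L) → ℕ) with hv1def
  set c := coverOf (k : L) with hcdef
  set v2 : ↥(MeetIrred L) → ℕ := ((θ c) : ↥(MeetIrred L) → ℕ) with hv2def
  have hkc : (k : L) < c := lt_coverOf k.2
  have hlt : θ (k : L) < θ c := θ.strictMono hkc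
  have hle : v1 ≤ v2 := Subtype.coe_le_coe.2 hlt.le
  obtain ⟨l, hl⟩ : ∃ l, v1 l < v2 l := by
    by_contra hcon
    push_neg at hcon
    exact hlt.ne (Subtype.ext (funext fun l => le_antisymm (hle l) (hcon l)))
  set TD : Finset L :=
    Finset.univ.filter (fun a => IsAtom a ∧ mergeExpo k₀ k₁ a l < v2 l) with hTDdef
  set M : ↥(MeetIrred L) → ℕ := TD.sup (mergeExpo k₀ k₁) with hMdef
  have hMS : M ∈ Sset k₀ k₁ := ⟨TD, fun a ha => (Finset.mem_filter.1 ha).2.1, rfl⟩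
  have hv1M : v1 ≤ M := by
    obtain ⟨T, hT, hw⟩ := (θ (k : L)).2
    have hsub : T ⊆ TD := by
      intro a ha
      refine Finset.mem_filter.2 ⟨Finset.mem_univ a, hT a ha, ?_⟩
      have h2 : mergeExpo k₀ k₁ a l ≤ v1 l := by
        rw [hv1def, hw, sup_coord]
        exact Finset.le_sup (f := fun a => mergeExpo k₀ k₁ a l) ha
      exact lt_of_le_of_lt h2 hl
    calc v1 = T.sup (mergeExpo k₀ k₁) := hw
    _ ≤ M := Finset.sup_mono hsub
  have hMl : M l < v2 l := by
    have he : M l = TD.sup (fun a => mergeExpo k₀ k₁ a l) := sup_coord k₀ k₁ TD l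
    rw [he]
    rw [Finset.sup_lt_iff (show (⊥ : ℕ) < v2 l from lt_of_le_of_lt (Nat.zero_le _) hl)]
    exact fun a ha => (Finset.mem_filter.1 ha).2.2
  have hkeq : θ (k : L) = ⟨M, hMS⟩ := by
    have h1 : θ (k : L) ≤ ⟨M, hMS⟩ := Subtype.coe_le_coe.1 hv1M
    set z := θ.symm ⟨M, hMS⟩ with hz
    have hkz : (k : L) ≤ z := by
      rw [hz, ← θ.symm_apply_apply (k : L)]
      exact θ.symm.monotone h1
    have hcz : ¬ c ≤ z := by
      intro hcle
      have h2 : θ c ≤ ⟨M, hMS⟩ := by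
        have h3 := θ.monotone hcle
        rwa [hz, θ.apply_symm_apply] at h3
      have h4 : v2 l ≤ M l := (Subtype.coe_le_coe.2 h2) l
      omega
    have hkz2 : (k : L) = z := by
      rcases eq_or_lt_of_le hkz with h | h
      · exact h
      · exact absurd (coverOf_le h) hcz
    rw [hkz2, hz]
    exact θ.apply_symm_apply _
  have hv1 : v1 = M := congrArg Subtype.val hkeq
  rw [hv1]
  by_cases hlk1 : l = k₁
  · exfalso
    have h0 : v2 k₁ = 0 := coord_k1_zero k₀ k₁ (θ c).2
    rw [hlk1] at hl
    omega
  by_cases hlk0 : l = k₀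
  · have hb : v2 l ≤ 2 := coord_le_two k₀ k₁ (θ c).2 l
    have hcases : v2 l = 1 ∨ v2 l = 2 := by omega
    rcases hcases with h1 | h2
    · have hTD : TD = EA ((k₀ : L) ⊓ (k₁ : L)) := by
        ext a
        simp only [hTDdef, EA, Finset.mem_filter, Finset.mem_univ, true_and]
        refine and_congr_right fun _ => ?_
        rw [h1, hlk0, merge_apply_k0 k₀ k₁ hne a]
        exact f01_lt_one_iff k₀ k₁ a
      rw [hMdef, hTD]
      exact Finset.mem_union_right _ (Finset.mem_insert_self _ _)
    · have hTD : TD = T2 k₀ k₁ := by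
        ext a
        simp only [hTDdef, T2, Finset.mem_filter, Finset.mem_univ, true_and]
        refine and_congr_right fun _ => ?_
        rw [h2, hlk0, merge_apply_k0 k₀ k₁ hne a]
        exact f01_lt_two_iff k₀ k₁ a
      rw [hMdef, hTD]
      exact Finset.mem_union_right _ (Finset.mem_insert_of_mem (Finset.mem_singleton_self _))
  · have hb : v2 l ≤ 1 := coord_le_one k₀ k₁ hlk0 (θ c).2
    have h1 : v2 l = 1 := by omega
    have hTD : TD = EA (l : L) := by
      ext a
      simp only [hTDdef, EA, Finset.mem_filter, Finset.mem_univ, true_and]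
      refine and_congr_right fun _ => ?_
      rw [h1, merge_apply_other k₀ k₁ hlk1 hlk0 a]
      by_cases hal : a ≤ (l : L)
      · simp [hal]
      · simp [hal]
    rw [hMdef, hTD]
    refine Finset.mem_union_left _ (Finset.mem_image.2 ⟨l, ?_, rfl⟩)
    simp [DD, hlk0, hlk1]

def Hmap (x y : ↥(MeetIrred L)) :
    (↥(MeetIrred L) → ℕ) × (↥(MeetIrred L) → ℕ) :=
  if x = k₀ then
    (if y = k₀ then (XX k₀ k₁, XX k₀ k₁) else (XX k₀ k₁, etaL k₀ k₁ (y : L)))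
  else if x = k₁ then
    (if y = k₁ then (YY k₀ k₁, YY k₀ k₁)
     else if (k₀ : L) ≤ (y : L) then (YY k₀ k₁, etaL k₀ k₁ (y : L))
     else (XX k₀ k₁, etaL k₀ k₁ (y : L)))
  else if y = k₀ then (etaL k₀ k₁ (x : L), YY k₀ k₁)
  else if y = k₁ then
    (if (x : L) ≤ (k₀ : L) then (etaL k₀ k₁ (x : L), XX k₀ k₁)
     else (etaL k₀ k₁ (x : L), YY k₀ k₁))
  else (etaL k₀ k₁ (x : L), etaL k₀ k₁ (y : L))

lemma backward (hne : k₀ ≠ k₁) (h01 : ¬ (k₀ : L) ≤ (k₁ : L)) (h10 : ¬ (k₁ : L) ≤ (k₀ : L))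
    (θ : L ≃o ↥(Sset k₀ k₁)) : False := by
  set X := XX k₀ k₁ with hXdef
  set Y := YY k₀ k₁ with hYdef
  set et : ↥(MeetIrred L) → (↥(MeetIrred L) → ℕ) := fun l => etaL k₀ k₁ (l : L) with hetdef
  set g : ↥(MeetIrred L) → (↥(MeetIrred L) → ℕ) :=
    fun k => ((θ (k : L)) : ↥(MeetIrred L) → ℕ) with hgdef
  have hginj : Function.Injective g := by
    intro a b h
    exact Subtype.coe_injective (θ.injective (Subtype.ext h))
  have hgle : ∀ a b : ↥(MeetIrred L), g a ≤ g b ↔ (a : L) ≤ (b : L) := by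
    intro a b
    constructor
    · intro h; exact θ.le_iff_le.1 (Subtype.coe_le_coe.1 h)
    · intro h; exact Subtype.coe_le_coe.2 (θ.monotone h)
  set n := Fintype.card ↥(MeetIrred L) with hn
  have h2n : 2 ≤ n := by
    have h1 : ({k₀, k₁} : Finset ↥(MeetIrred L)).card = 2 := Finset.card_pair hne
    have h2 : ({k₀, k₁} : Finset ↥(MeetIrred L)).card ≤ Finset.univ.card :=
      Finset.card_le_card (Finset.subset_univ _)
    rw [Finset.card_univ] at h2
    omega
  have hsub : Finset.univ.image g ⊆ Mset k₀ k₁ := by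
    intro w hw
    obtain ⟨k, _, rfl⟩ := Finset.mem_image.1 hw
    exact stepA k₀ k₁ hne θ k
  have hcard1 : (Finset.univ.image g).card = n := by
    rw [Finset.card_image_of_injective _ hginj, Finset.card_univ]
  have hDDcard : (DD k₀ k₁).card = n - 2 := by
    rw [DD, Finset.card_sdiff_of_subset (Finset.subset_univ _), Finset.card_pair hne, Finset.card_univ]
  set A := (DD k₀ k₁).image (fun l : ↥(MeetIrred L) => etaL k₀ k₁ (l : L)) with hAdef
  have hAcard_le : A.card ≤ n - 2 := le_trans Finset.card_image_le (le_of_eq hDDcard)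
  have hXYle : ({X, Y} : Finset (↥(MeetIrred L) → ℕ)).card ≤ 2 := by
    refine le_trans (Finset.card_insert_le _ _) ?_
    rw [Finset.card_singleton]
  have hMdef : Mset k₀ k₁ = A ∪ {X, Y} := by rw [hAdef, hXdef, hYdef, Mset]
  have hMcard_le : (Mset k₀ k₁).card ≤ n := by
    rw [hMdef]
    have := Finset.card_union_le A ({X, Y} : Finset (↥(MeetIrred L) → ℕ))
    omega
  have hMeq : Finset.univ.image g = Mset k₀ k₁ :=
    Finset.eq_of_subset_of_card_le hsub (by omega)
  have hMcard : (Mset k₀ k₁).card = n := by rw [← hMeq, hcard1]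
  have hsum := Finset.card_union_add_card_inter A ({X, Y} : Finset (↥(MeetIrred L) → ℕ))
  have hXneY : X ≠ Y := by
    intro h
    have h1 : ({X, Y} : Finset (↥(MeetIrred L) → ℕ)).card = 1 := by
      rw [h, Finset.insert_eq_self.2 (Finset.mem_singleton_self _), Finset.card_singleton]
    have h2 := Finset.card_union_le A ({X, Y} : Finset (↥(MeetIrred L) → ℕ))
    rw [← hMdef] at h2
    omega
  have hXYcard : ({X, Y} : Finset (↥(MeetIrred L) → ℕ)).card = 2 := Finset.card_pair hXneY
  rw [← hMdef, hMcard, hXYcard] at hsum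
  have hintercard : (A ∩ ({X, Y} : Finset (↥(MeetIrred L) → ℕ))).card = 0 ∧ A.card = n - 2 := by
    constructor <;> omega
  have hinterempty : A ∩ ({X, Y} : Finset (↥(MeetIrred L) → ℕ)) = ∅ :=
    Finset.card_eq_zero.1 hintercard.1
  have hXA : X ∉ A := by
    intro h
    have h2 : X ∈ A ∩ ({X, Y} : Finset (↥(MeetIrred L) → ℕ)) :=
      Finset.mem_inter.2 ⟨h, Finset.mem_insert_self _ _⟩
    rw [hinterempty] at h2
    exact absurd h2 (Finset.notMem_empty _)
  have hYA : Y ∉ A := by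
    intro h
    have h2 : Y ∈ A ∩ ({X, Y} : Finset (↥(MeetIrred L) → ℕ)) :=
      Finset.mem_inter.2 ⟨h, Finset.mem_insert_of_mem (Finset.mem_singleton_self _)⟩
    rw [hinterempty] at h2
    exact absurd h2 (Finset.notMem_empty _)
  have hAinjOn : Set.InjOn (fun l : ↥(MeetIrred L) => etaL k₀ k₁ (l : L)) ↑(DD k₀ k₁) := by
    apply Finset.card_image_iff.1
    rw [← hAdef, hintercard.2, hDDcard]
  have hmemDD : ∀ l : ↥(MeetIrred L), ¬ l = k₀ → ¬ l = k₁ → l ∈ DD k₀ k₁ := by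
    intro l h0 h1
    rw [DD, Finset.mem_sdiff]
    refine ⟨Finset.mem_univ _, ?_⟩
    simp [h0, h1]
  have hetA : ∀ l : ↥(MeetIrred L), ¬ l = k₀ → ¬ l = k₁ → et l ∈ A := by
    intro l h0 h1
    exact Finset.mem_image_of_mem _ (hmemDD l h0 h1)
  have hetnX : ∀ l : ↥(MeetIrred L), ¬ l = k₀ → ¬ l = k₁ → et l ≠ X := by
    intro l h0 h1 h
    exact hXA (h ▸ hetA l h0 h1)
  have hetnY : ∀ l : ↥(MeetIrred L), ¬ l = k₀ → ¬ l = k₁ → et l ≠ Y := by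
    intro l h0 h1 h
    exact hYA (h ▸ hetA l h0 h1)
  have hetinj : ∀ l l' : ↥(MeetIrred L), ¬ l = k₀ → ¬ l = k₁ → ¬ l' = k₀ → ¬ l' = k₁ →
      et l = et l' → l = l' := by
    intro l l' h0 h1 h0' h1' h
    exact hAinjOn (Finset.mem_coe.2 (hmemDD l h0 h1)) (Finset.mem_coe.2 (hmemDD l' h0' h1')) h
  have hXmem : X ∈ Mset k₀ k₁ := by
    rw [hMdef]; exact Finset.mem_union_right _ (Finset.mem_insert_self _ _)
  have hYmem : Y ∈ Mset k₀ k₁ := by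
    rw [hMdef]
    exact Finset.mem_union_right _ (Finset.mem_insert_of_mem (Finset.mem_singleton_self _))
  have hetMem : ∀ l : ↥(MeetIrred L), ¬ l = k₀ → ¬ l = k₁ → et l ∈ Mset k₀ k₁ := by
    intro l h0 h1
    rw [hMdef]
    exact Finset.mem_union_left _ (hetA l h0 h1)
  have hX_le_et : ∀ {c : L}, (k₀ : L) ⊓ (k₁ : L) ≤ c → X ≤ etaL k₀ k₁ c :=
    fun h => etaL_mono k₀ k₁ h
  have het_le_X : ∀ {c : L}, c ≤ (k₀ : L) ⊓ (k₁ : L) → etaL k₀ k₁ c ≤ X :=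
    fun h => etaL_mono k₀ k₁ h
  have het_mono : ∀ {c c' : L}, c ≤ c' → etaL k₀ k₁ c ≤ etaL k₀ k₁ c' :=
    fun h => etaL_mono k₀ k₁ h
  have het_le_Y : ∀ {c : L}, (c ≤ (k₀ : L) ∨ c ≤ (k₁ : L)) → etaL k₀ k₁ c ≤ Y := by
    intro c h
    rcases h with h | h
    · exact Finset.sup_mono (EA_subset_T2_left k₀ k₁ h)
    · exact Finset.sup_mono (EA_subset_T2_right k₀ k₁ h)
  have hY_le_et : ∀ {c : L}, (k₀ : L) ≤ c → (k₁ : L) ≤ c → Y ≤ etaL k₀ k₁ c :=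
    fun h0 h1 => Finset.sup_mono (T2_subset_EA k₀ k₁ h0 h1)
  have hX_le_Y : X ≤ Y := XX_le_YY k₀ k₁
  set PL := Finset.univ.filter
    (fun p : ↥(MeetIrred L) × ↥(MeetIrred L) => (p.1 : L) ≤ (p.2 : L)) with hPLdef
  set PM := (Mset k₀ k₁ ×ˢ Mset k₀ k₁).filter (fun p => p.1 ≤ p.2) with hPMdef
  have hcardeq : PL.card = PM.card := by
    apply Finset.card_bij (fun p _ => (g p.1, g p.2))
    · intro p hp
      have hp2 : (p.1 : L) ≤ (p.2 : L) := (Finset.mem_filter.1 hp).2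
      refine Finset.mem_filter.2 ⟨Finset.mem_product.2 ⟨?_, ?_⟩, (hgle _ _).2 hp2⟩
      · rw [← hMeq]; exact Finset.mem_image_of_mem g (Finset.mem_univ _)
      · rw [← hMeq]; exact Finset.mem_image_of_mem g (Finset.mem_univ _)
    · intro p _ q _ h
      rw [Prod.mk.injEq] at h
      exact Prod.ext (hginj h.1) (hginj h.2)
    · intro q hq
      have hq0 := Finset.mem_filter.1 hq
      have hq1 : q.1 ∈ Mset k₀ k₁ := (Finset.mem_product.1 hq0.1).1
      have hq2 : q.2 ∈ Mset k₀ k₁ := (Finset.mem_product.1 hq0.1).2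
      rw [← hMeq] at hq1 hq2
      obtain ⟨a, _, ha⟩ := Finset.mem_image.1 hq1
      obtain ⟨b, _, hb⟩ := Finset.mem_image.1 hq2
      have hab : (a : L) ≤ (b : L) := by
        rw [← hgle a b] at *
        rw [ha, hb]
        exact hq0.2
      refine ⟨(a, b), Finset.mem_filter.2 ⟨Finset.mem_univ _, hab⟩, ?_⟩
      rw [ha, hb]
  have hmaps : ∀ p ∈ PL, Hmap k₀ k₁ p.1 p.2 ∈ PM := by
    rintro ⟨x, y⟩ hp
    have hxy : (x : L) ≤ (y : L) := (Finset.mem_filter.1 hp).2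
    simp only []
    by_cases hp1 : x = k₀
    · by_cases hp2 : y = k₀
      · -- case 1
        have hv : Hmap k₀ k₁ x y = (X, X) := by
          simp only [Hmap]
          rw [if_pos hp1, if_pos hp2]
        rw [hv]
        refine Finset.mem_filter.2 ⟨Finset.mem_product.2 ⟨?_, ?_⟩, ?_⟩
        · exact hXmem
        · exact hXmem
        · exact le_refl _
      · have hpy1 : ¬ y = k₁ := fun hcon => h01 (by rw [hp1, hcon] at hxy; exact hxy)
        have hv : Hmap k₀ k₁ x y = (X, et y) := by
          simp only [Hmap]
          rw [if_pos hp1, if_neg hp2]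
        rw [hv]
        refine Finset.mem_filter.2 ⟨Finset.mem_product.2 ⟨?_, ?_⟩, ?_⟩
        · exact hXmem
        · exact hetMem _ hp2 hpy1
        · exact hX_le_et (le_trans inf_le_left (by rw [← hp1]; exact hxy))
    · by_cases hp2 : x = k₁
      · by_cases hp3 : y = k₁
        · -- case 3
          have hv : Hmap k₀ k₁ x y = (Y, Y) := by
            simp only [Hmap]
            rw [if_neg hp1, if_pos hp2, if_pos hp3]
          rw [hv]
          refine Finset.mem_filter.2 ⟨Finset.mem_product.2 ⟨?_, ?_⟩, ?_⟩
          · exact hYmem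
          · exact hYmem
          · exact le_refl _
        · have hpy0 : ¬ y = k₀ := fun hcon => h10 (by rw [hp2, hcon] at hxy; exact hxy)
          by_cases hp4 : (k₀ : L) ≤ (y : L)
          · -- case 4
            have hv : Hmap k₀ k₁ x y = (Y, et y) := by
              simp only [Hmap]
              rw [if_neg hp1, if_pos hp2, if_neg hp3, if_pos hp4]
            rw [hv]
            refine Finset.mem_filter.2 ⟨Finset.mem_product.2 ⟨?_, ?_⟩, ?_⟩
            · exact hYmem
            · exact hetMem _ hpy0 hp3
            · exact hY_le_et hp4 (by rw [← hp2]; exact hxy)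
          · -- case 5
            have hv : Hmap k₀ k₁ x y = (X, et y) := by
              simp only [Hmap]
              rw [if_neg hp1, if_pos hp2, if_neg hp3, if_neg hp4]
            rw [hv]
            refine Finset.mem_filter.2 ⟨Finset.mem_product.2 ⟨?_, ?_⟩, ?_⟩
            · exact hXmem
            · exact hetMem _ hpy0 hp3
            · exact hX_le_et (le_trans inf_le_right (by rw [← hp2]; exact hxy))
      · by_cases hp3 : y = k₀
        · -- case 6
          have hv : Hmap k₀ k₁ x y = (et x, Y) := by
            simp only [Hmap]
            rw [if_neg hp1, if_neg hp2, if_pos hp3]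
          rw [hv]
          refine Finset.mem_filter.2 ⟨Finset.mem_product.2 ⟨?_, ?_⟩, ?_⟩
          · exact hetMem _ hp1 hp2
          · exact hYmem
          · exact het_le_Y (Or.inl (by rw [← hp3]; exact hxy))
        · by_cases hp4 : y = k₁
          · by_cases hp5 : (x : L) ≤ (k₀ : L)
            · -- case 7
              have hv : Hmap k₀ k₁ x y = (et x, X) := by
                simp only [Hmap]
                rw [if_neg hp1, if_neg hp2, if_neg hp3, if_pos hp4, if_pos hp5]
              rw [hv]
              refine Finset.mem_filter.2 ⟨Finset.mem_product.2 ⟨?_, ?_⟩, ?_⟩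
              · exact hetMem _ hp1 hp2
              · exact hXmem
              · exact het_le_X (le_inf hp5 (by rw [← hp4]; exact hxy))
            · -- case 8
              have hv : Hmap k₀ k₁ x y = (et x, Y) := by
                simp only [Hmap]
                rw [if_neg hp1, if_neg hp2, if_neg hp3, if_pos hp4, if_neg hp5]
              rw [hv]
              refine Finset.mem_filter.2 ⟨Finset.mem_product.2 ⟨?_, ?_⟩, ?_⟩
              · exact hetMem _ hp1 hp2
              · exact hYmem
              · exact het_le_Y (Or.inr (by rw [← hp4]; exact hxy))
          · -- case 9
            have hv : Hmap k₀ k₁ x y = (et x, et y) := by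
              simp only [Hmap]
              rw [if_neg hp1, if_neg hp2, if_neg hp3, if_neg hp4]
            rw [hv]
            refine Finset.mem_filter.2 ⟨Finset.mem_product.2 ⟨?_, ?_⟩, ?_⟩
            · exact hetMem _ hp1 hp2
            · exact hetMem _ hp3 hp4
            · exact het_mono hxy
  have hnotXY : ∀ p ∈ PL, Hmap k₀ k₁ p.1 p.2 ≠ (X, Y) := by
    rintro ⟨x, y⟩ hp hcon
    have hxy : (x : L) ≤ (y : L) := (Finset.mem_filter.1 hp).2
    simp only [] at hcon
    by_cases hp1 : x = k₀
    · by_cases hp2 : y = k₀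
      · -- case 1
        have hv : Hmap k₀ k₁ x y = (X, X) := by
          simp only [Hmap]
          rw [if_pos hp1, if_pos hp2]
        rw [hv, Prod.mk.injEq] at hcon
        exact hXneY hcon.2
      · have hpy1 : ¬ y = k₁ := fun hcon => h01 (by rw [hp1, hcon] at hxy; exact hxy)
        have hv : Hmap k₀ k₁ x y = (X, et y) := by
          simp only [Hmap]
          rw [if_pos hp1, if_neg hp2]
        rw [hv, Prod.mk.injEq] at hcon
        exact hetnY _ hp2 hpy1 hcon.2
    · by_cases hp2 : x = k₁
      · by_cases hp3 : y = k₁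
        · -- case 3
          have hv : Hmap k₀ k₁ x y = (Y, Y) := by
            simp only [Hmap]
            rw [if_neg hp1, if_pos hp2, if_pos hp3]
          rw [hv, Prod.mk.injEq] at hcon
          exact hXneY hcon.1.symm
        · have hpy0 : ¬ y = k₀ := fun hcon => h10 (by rw [hp2, hcon] at hxy; exact hxy)
          by_cases hp4 : (k₀ : L) ≤ (y : L)
          · -- case 4
            have hv : Hmap k₀ k₁ x y = (Y, et y) := by
              simp only [Hmap]
              rw [if_neg hp1, if_pos hp2, if_neg hp3, if_pos hp4]
            rw [hv, Prod.mk.injEq] at hcon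
            exact hXneY hcon.1.symm
          · -- case 5
            have hv : Hmap k₀ k₁ x y = (X, et y) := by
              simp only [Hmap]
              rw [if_neg hp1, if_pos hp2, if_neg hp3, if_neg hp4]
            rw [hv, Prod.mk.injEq] at hcon
            exact hetnY _ hpy0 hp3 hcon.2
      · by_cases hp3 : y = k₀
        · -- case 6
          have hv : Hmap k₀ k₁ x y = (et x, Y) := by
            simp only [Hmap]
            rw [if_neg hp1, if_neg hp2, if_pos hp3]
          rw [hv, Prod.mk.injEq] at hcon
          exact hetnX _ hp1 hp2 hcon.1
        · by_cases hp4 : y = k₁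
          · by_cases hp5 : (x : L) ≤ (k₀ : L)
            · -- case 7
              have hv : Hmap k₀ k₁ x y = (et x, X) := by
                simp only [Hmap]
                rw [if_neg hp1, if_neg hp2, if_neg hp3, if_pos hp4, if_pos hp5]
              rw [hv, Prod.mk.injEq] at hcon
              exact hetnX _ hp1 hp2 hcon.1
            · -- case 8
              have hv : Hmap k₀ k₁ x y = (et x, Y) := by
                simp only [Hmap]
                rw [if_neg hp1, if_neg hp2, if_neg hp3, if_pos hp4, if_neg hp5]
              rw [hv, Prod.mk.injEq] at hcon
              exact hetnX _ hp1 hp2 hcon.1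
          · -- case 9
            have hv : Hmap k₀ k₁ x y = (et x, et y) := by
              simp only [Hmap]
              rw [if_neg hp1, if_neg hp2, if_neg hp3, if_neg hp4]
            rw [hv, Prod.mk.injEq] at hcon
            exact hetnX _ hp1 hp2 hcon.1
  have hinjH : Set.InjOn (fun p : ↥(MeetIrred L) × ↥(MeetIrred L) => Hmap k₀ k₁ p.1 p.2) ↑PL := by
    rintro ⟨x, y⟩ hp ⟨u, v⟩ hq heq
    have hxy : (x : L) ≤ (y : L) := (Finset.mem_filter.1 (Finset.mem_coe.1 hp)).2
    have huv : (u : L) ≤ (v : L) := (Finset.mem_filter.1 (Finset.mem_coe.1 hq)).2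
    simp only [] at heq
    by_cases hp1 : x = k₀
    · by_cases hp2 : y = k₀
      · -- case 1
        by_cases hq1 : u = k₀
        · by_cases hq2 : v = k₀
          · -- case 1
            have hvp : Hmap k₀ k₁ x y = (X, X) := by
              simp only [Hmap]; rw [if_pos hp1, if_pos hp2]
            have hvq : Hmap k₀ k₁ u v = (X, X) := by
              simp only [Hmap]; rw [if_pos hq1, if_pos hq2]
            rw [hvp, hvq, Prod.mk.injEq] at heq
            rw [Prod.mk.injEq]
            exact ⟨hp1.trans hq1.symm, hp2.trans hq2.symm⟩
          · have hqy1 : ¬ v = k₁ := fun hcon => h01 (by rw [hq1, hcon] at huv; exact huv)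
            have hvp : Hmap k₀ k₁ x y = (X, X) := by
              simp only [Hmap]; rw [if_pos hp1, if_pos hp2]
            have hvq : Hmap k₀ k₁ u v = (X, et v) := by
              simp only [Hmap]; rw [if_pos hq1, if_neg hq2]
            rw [hvp, hvq, Prod.mk.injEq] at heq
            exact absurd heq.2.symm (hetnX _ hq2 hqy1)
        · by_cases hq2 : u = k₁
          · by_cases hq3 : v = k₁
            · -- case 3
              have hvp : Hmap k₀ k₁ x y = (X, X) := by
                simp only [Hmap]; rw [if_pos hp1, if_pos hp2]
              have hvq : Hmap k₀ k₁ u v = (Y, Y) := by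
                simp only [Hmap]; rw [if_neg hq1, if_pos hq2, if_pos hq3]
              rw [hvp, hvq, Prod.mk.injEq] at heq
              exact absurd heq.1 hXneY
            · have hqy0 : ¬ v = k₀ := fun hcon => h10 (by rw [hq2, hcon] at huv; exact huv)
              by_cases hq4 : (k₀ : L) ≤ (v : L)
              · -- case 4
                have hvp : Hmap k₀ k₁ x y = (X, X) := by
                  simp only [Hmap]; rw [if_pos hp1, if_pos hp2]
                have hvq : Hmap k₀ k₁ u v = (Y, et v) := by
                  simp only [Hmap]; rw [if_neg hq1, if_pos hq2, if_neg hq3, if_pos hq4]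
                rw [hvp, hvq, Prod.mk.injEq] at heq
                exact absurd heq.1 hXneY
              · -- case 5
                have hvp : Hmap k₀ k₁ x y = (X, X) := by
                  simp only [Hmap]; rw [if_pos hp1, if_pos hp2]
                have hvq : Hmap k₀ k₁ u v = (X, et v) := by
                  simp only [Hmap]; rw [if_neg hq1, if_pos hq2, if_neg hq3, if_neg hq4]
                rw [hvp, hvq, Prod.mk.injEq] at heq
                exact absurd heq.2.symm (hetnX _ hqy0 hq3)
          · by_cases hq3 : v = k₀
            · -- case 6
              have hvp : Hmap k₀ k₁ x y = (X, X) := by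
                simp only [Hmap]; rw [if_pos hp1, if_pos hp2]
              have hvq : Hmap k₀ k₁ u v = (et u, Y) := by
                simp only [Hmap]; rw [if_neg hq1, if_neg hq2, if_pos hq3]
              rw [hvp, hvq, Prod.mk.injEq] at heq
              exact absurd heq.1.symm (hetnX _ hq1 hq2)
            · by_cases hq4 : v = k₁
              · by_cases hq5 : (u : L) ≤ (k₀ : L)
                · -- case 7
                  have hvp : Hmap k₀ k₁ x y = (X, X) := by
                    simp only [Hmap]; rw [if_pos hp1, if_pos hp2]
                  have hvq : Hmap k₀ k₁ u v = (et u, X) := by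
                    simp only [Hmap]; rw [if_neg hq1, if_neg hq2, if_neg hq3, if_pos hq4, if_pos hq5]
                  rw [hvp, hvq, Prod.mk.injEq] at heq
                  exact absurd heq.1.symm (hetnX _ hq1 hq2)
                · -- case 8
                  have hvp : Hmap k₀ k₁ x y = (X, X) := by
                    simp only [Hmap]; rw [if_pos hp1, if_pos hp2]
                  have hvq : Hmap k₀ k₁ u v = (et u, Y) := by
                    simp only [Hmap]; rw [if_neg hq1, if_neg hq2, if_neg hq3, if_pos hq4, if_neg hq5]
                  rw [hvp, hvq, Prod.mk.injEq] at heq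
                  exact absurd heq.1.symm (hetnX _ hq1 hq2)
              · -- case 9
                have hvp : Hmap k₀ k₁ x y = (X, X) := by
                  simp only [Hmap]; rw [if_pos hp1, if_pos hp2]
                have hvq : Hmap k₀ k₁ u v = (et u, et v) := by
                  simp only [Hmap]; rw [if_neg hq1, if_neg hq2, if_neg hq3, if_neg hq4]
                rw [hvp, hvq, Prod.mk.injEq] at heq
                exact absurd heq.1.symm (hetnX _ hq1 hq2)
      · have hpy1 : ¬ y = k₁ := fun hcon => h01 (by rw [hp1, hcon] at hxy; exact hxy)
        by_cases hq1 : u = k₀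
        · by_cases hq2 : v = k₀
          · -- case 1
            have hvp : Hmap k₀ k₁ x y = (X, et y) := by
              simp only [Hmap]; rw [if_pos hp1, if_neg hp2]
            have hvq : Hmap k₀ k₁ u v = (X, X) := by
              simp only [Hmap]; rw [if_pos hq1, if_pos hq2]
            rw [hvp, hvq, Prod.mk.injEq] at heq
            exact absurd heq.2 (hetnX _ hp2 hpy1)
          · have hqy1 : ¬ v = k₁ := fun hcon => h01 (by rw [hq1, hcon] at huv; exact huv)
            have hvp : Hmap k₀ k₁ x y = (X, et y) := by
              simp only [Hmap]; rw [if_pos hp1, if_neg hp2]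
            have hvq : Hmap k₀ k₁ u v = (X, et v) := by
              simp only [Hmap]; rw [if_pos hq1, if_neg hq2]
            rw [hvp, hvq, Prod.mk.injEq] at heq
            rw [Prod.mk.injEq]
            exact ⟨hp1.trans hq1.symm, hetinj _ _ hp2 hpy1 hq2 hqy1 heq.2⟩
        · by_cases hq2 : u = k₁
          · by_cases hq3 : v = k₁
            · -- case 3
              have hvp : Hmap k₀ k₁ x y = (X, et y) := by
                simp only [Hmap]; rw [if_pos hp1, if_neg hp2]
              have hvq : Hmap k₀ k₁ u v = (Y, Y) := by
                simp only [Hmap]; rw [if_neg hq1, if_pos hq2, if_pos hq3]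
              rw [hvp, hvq, Prod.mk.injEq] at heq
              exact absurd heq.1 hXneY
            · have hqy0 : ¬ v = k₀ := fun hcon => h10 (by rw [hq2, hcon] at huv; exact huv)
              by_cases hq4 : (k₀ : L) ≤ (v : L)
              · -- case 4
                have hvp : Hmap k₀ k₁ x y = (X, et y) := by
                  simp only [Hmap]; rw [if_pos hp1, if_neg hp2]
                have hvq : Hmap k₀ k₁ u v = (Y, et v) := by
                  simp only [Hmap]; rw [if_neg hq1, if_pos hq2, if_neg hq3, if_pos hq4]
                rw [hvp, hvq, Prod.mk.injEq] at heq
                exact absurd heq.1 hXneY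
              · -- case 5
                have hvp : Hmap k₀ k₁ x y = (X, et y) := by
                  simp only [Hmap]; rw [if_pos hp1, if_neg hp2]
                have hvq : Hmap k₀ k₁ u v = (X, et v) := by
                  simp only [Hmap]; rw [if_neg hq1, if_pos hq2, if_neg hq3, if_neg hq4]
                rw [hvp, hvq, Prod.mk.injEq] at heq
                have exy := hetinj _ _ hp2 hpy1 hqy0 hq3 heq.2
                have hk0y : (k₀ : L) ≤ (y : L) := by rw [← hp1]; exact hxy
                rw [exy] at hk0y
                exact absurd hk0y hq4
          · by_cases hq3 : v = k₀
            · -- case 6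
              have hvp : Hmap k₀ k₁ x y = (X, et y) := by
                simp only [Hmap]; rw [if_pos hp1, if_neg hp2]
              have hvq : Hmap k₀ k₁ u v = (et u, Y) := by
                simp only [Hmap]; rw [if_neg hq1, if_neg hq2, if_pos hq3]
              rw [hvp, hvq, Prod.mk.injEq] at heq
              exact absurd heq.1.symm (hetnX _ hq1 hq2)
            · by_cases hq4 : v = k₁
              · by_cases hq5 : (u : L) ≤ (k₀ : L)
                · -- case 7
                  have hvp : Hmap k₀ k₁ x y = (X, et y) := by
                    simp only [Hmap]; rw [if_pos hp1, if_neg hp2]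
                  have hvq : Hmap k₀ k₁ u v = (et u, X) := by
                    simp only [Hmap]; rw [if_neg hq1, if_neg hq2, if_neg hq3, if_pos hq4, if_pos hq5]
                  rw [hvp, hvq, Prod.mk.injEq] at heq
                  exact absurd heq.1.symm (hetnX _ hq1 hq2)
                · -- case 8
                  have hvp : Hmap k₀ k₁ x y = (X, et y) := by
                    simp only [Hmap]; rw [if_pos hp1, if_neg hp2]
                  have hvq : Hmap k₀ k₁ u v = (et u, Y) := by
                    simp only [Hmap]; rw [if_neg hq1, if_neg hq2, if_neg hq3, if_pos hq4, if_neg hq5]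
                  rw [hvp, hvq, Prod.mk.injEq] at heq
                  exact absurd heq.1.symm (hetnX _ hq1 hq2)
              · -- case 9
                have hvp : Hmap k₀ k₁ x y = (X, et y) := by
                  simp only [Hmap]; rw [if_pos hp1, if_neg hp2]
                have hvq : Hmap k₀ k₁ u v = (et u, et v) := by
                  simp only [Hmap]; rw [if_neg hq1, if_neg hq2, if_neg hq3, if_neg hq4]
                rw [hvp, hvq, Prod.mk.injEq] at heq
                exact absurd heq.1.symm (hetnX _ hq1 hq2)
    · by_cases hp2 : x = k₁
      · by_cases hp3 : y = k₁
        · -- case 3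
          by_cases hq1 : u = k₀
          · by_cases hq2 : v = k₀
            · -- case 1
              have hvp : Hmap k₀ k₁ x y = (Y, Y) := by
                simp only [Hmap]; rw [if_neg hp1, if_pos hp2, if_pos hp3]
              have hvq : Hmap k₀ k₁ u v = (X, X) := by
                simp only [Hmap]; rw [if_pos hq1, if_pos hq2]
              rw [hvp, hvq, Prod.mk.injEq] at heq
              exact absurd heq.1.symm hXneY
            · have hqy1 : ¬ v = k₁ := fun hcon => h01 (by rw [hq1, hcon] at huv; exact huv)
              have hvp : Hmap k₀ k₁ x y = (Y, Y) := by
                simp only [Hmap]; rw [if_neg hp1, if_pos hp2, if_pos hp3]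
              have hvq : Hmap k₀ k₁ u v = (X, et v) := by
                simp only [Hmap]; rw [if_pos hq1, if_neg hq2]
              rw [hvp, hvq, Prod.mk.injEq] at heq
              exact absurd heq.1.symm hXneY
          · by_cases hq2 : u = k₁
            · by_cases hq3 : v = k₁
              · -- case 3
                have hvp : Hmap k₀ k₁ x y = (Y, Y) := by
                  simp only [Hmap]; rw [if_neg hp1, if_pos hp2, if_pos hp3]
                have hvq : Hmap k₀ k₁ u v = (Y, Y) := by
                  simp only [Hmap]; rw [if_neg hq1, if_pos hq2, if_pos hq3]
                rw [hvp, hvq, Prod.mk.injEq] at heq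
                rw [Prod.mk.injEq]
                exact ⟨hp2.trans hq2.symm, hp3.trans hq3.symm⟩
              · have hqy0 : ¬ v = k₀ := fun hcon => h10 (by rw [hq2, hcon] at huv; exact huv)
                by_cases hq4 : (k₀ : L) ≤ (v : L)
                · -- case 4
                  have hvp : Hmap k₀ k₁ x y = (Y, Y) := by
                    simp only [Hmap]; rw [if_neg hp1, if_pos hp2, if_pos hp3]
                  have hvq : Hmap k₀ k₁ u v = (Y, et v) := by
                    simp only [Hmap]; rw [if_neg hq1, if_pos hq2, if_neg hq3, if_pos hq4]
                  rw [hvp, hvq, Prod.mk.injEq] at heq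
                  exact absurd heq.2.symm (hetnY _ hqy0 hq3)
                · -- case 5
                  have hvp : Hmap k₀ k₁ x y = (Y, Y) := by
                    simp only [Hmap]; rw [if_neg hp1, if_pos hp2, if_pos hp3]
                  have hvq : Hmap k₀ k₁ u v = (X, et v) := by
                    simp only [Hmap]; rw [if_neg hq1, if_pos hq2, if_neg hq3, if_neg hq4]
                  rw [hvp, hvq, Prod.mk.injEq] at heq
                  exact absurd heq.1.symm hXneY
            · by_cases hq3 : v = k₀
              · -- case 6
                have hvp : Hmap k₀ k₁ x y = (Y, Y) := by
                  simp only [Hmap]; rw [if_neg hp1, if_pos hp2, if_pos hp3]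
                have hvq : Hmap k₀ k₁ u v = (et u, Y) := by
                  simp only [Hmap]; rw [if_neg hq1, if_neg hq2, if_pos hq3]
                rw [hvp, hvq, Prod.mk.injEq] at heq
                exact absurd heq.1.symm (hetnY _ hq1 hq2)
              · by_cases hq4 : v = k₁
                · by_cases hq5 : (u : L) ≤ (k₀ : L)
                  · -- case 7
                    have hvp : Hmap k₀ k₁ x y = (Y, Y) := by
                      simp only [Hmap]; rw [if_neg hp1, if_pos hp2, if_pos hp3]
                    have hvq : Hmap k₀ k₁ u v = (et u, X) := by
                      simp only [Hmap]; rw [if_neg hq1, if_neg hq2, if_neg hq3, if_pos hq4, if_pos hq5]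
                    rw [hvp, hvq, Prod.mk.injEq] at heq
                    exact absurd heq.1.symm (hetnY _ hq1 hq2)
                  · -- case 8
                    have hvp : Hmap k₀ k₁ x y = (Y, Y) := by
                      simp only [Hmap]; rw [if_neg hp1, if_pos hp2, if_pos hp3]
                    have hvq : Hmap k₀ k₁ u v = (et u, Y) := by
                      simp only [Hmap]; rw [if_neg hq1, if_neg hq2, if_neg hq3, if_pos hq4, if_neg hq5]
                    rw [hvp, hvq, Prod.mk.injEq] at heq
                    exact absurd heq.1.symm (hetnY _ hq1 hq2)
                · -- case 9
                  have hvp : Hmap k₀ k₁ x y = (Y, Y) := by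
                    simp only [Hmap]; rw [if_neg hp1, if_pos hp2, if_pos hp3]
                  have hvq : Hmap k₀ k₁ u v = (et u, et v) := by
                    simp only [Hmap]; rw [if_neg hq1, if_neg hq2, if_neg hq3, if_neg hq4]
                  rw [hvp, hvq, Prod.mk.injEq] at heq
                  exact absurd heq.1.symm (hetnY _ hq1 hq2)
        · have hpy0 : ¬ y = k₀ := fun hcon => h10 (by rw [hp2, hcon] at hxy; exact hxy)
          by_cases hp4 : (k₀ : L) ≤ (y : L)
          · -- case 4
            by_cases hq1 : u = k₀
            · by_cases hq2 : v = k₀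
              · -- case 1
                have hvp : Hmap k₀ k₁ x y = (Y, et y) := by
                  simp only [Hmap]; rw [if_neg hp1, if_pos hp2, if_neg hp3, if_pos hp4]
                have hvq : Hmap k₀ k₁ u v = (X, X) := by
                  simp only [Hmap]; rw [if_pos hq1, if_pos hq2]
                rw [hvp, hvq, Prod.mk.injEq] at heq
                exact absurd heq.1.symm hXneY
              · have hqy1 : ¬ v = k₁ := fun hcon => h01 (by rw [hq1, hcon] at huv; exact huv)
                have hvp : Hmap k₀ k₁ x y = (Y, et y) := by
                  simp only [Hmap]; rw [if_neg hp1, if_pos hp2, if_neg hp3, if_pos hp4]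
                have hvq : Hmap k₀ k₁ u v = (X, et v) := by
                  simp only [Hmap]; rw [if_pos hq1, if_neg hq2]
                rw [hvp, hvq, Prod.mk.injEq] at heq
                exact absurd heq.1.symm hXneY
            · by_cases hq2 : u = k₁
              · by_cases hq3 : v = k₁
                · -- case 3
                  have hvp : Hmap k₀ k₁ x y = (Y, et y) := by
                    simp only [Hmap]; rw [if_neg hp1, if_pos hp2, if_neg hp3, if_pos hp4]
                  have hvq : Hmap k₀ k₁ u v = (Y, Y) := by
                    simp only [Hmap]; rw [if_neg hq1, if_pos hq2, if_pos hq3]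
                  rw [hvp, hvq, Prod.mk.injEq] at heq
                  exact absurd heq.2 (hetnY _ hpy0 hp3)
                · have hqy0 : ¬ v = k₀ := fun hcon => h10 (by rw [hq2, hcon] at huv; exact huv)
                  by_cases hq4 : (k₀ : L) ≤ (v : L)
                  · -- case 4
                    have hvp : Hmap k₀ k₁ x y = (Y, et y) := by
                      simp only [Hmap]; rw [if_neg hp1, if_pos hp2, if_neg hp3, if_pos hp4]
                    have hvq : Hmap k₀ k₁ u v = (Y, et v) := by
                      simp only [Hmap]; rw [if_neg hq1, if_pos hq2, if_neg hq3, if_pos hq4]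
                    rw [hvp, hvq, Prod.mk.injEq] at heq
                    rw [Prod.mk.injEq]
                    exact ⟨hp2.trans hq2.symm, hetinj _ _ hpy0 hp3 hqy0 hq3 heq.2⟩
                  · -- case 5
                    have hvp : Hmap k₀ k₁ x y = (Y, et y) := by
                      simp only [Hmap]; rw [if_neg hp1, if_pos hp2, if_neg hp3, if_pos hp4]
                    have hvq : Hmap k₀ k₁ u v = (X, et v) := by
                      simp only [Hmap]; rw [if_neg hq1, if_pos hq2, if_neg hq3, if_neg hq4]
                    rw [hvp, hvq, Prod.mk.injEq] at heq
                    exact absurd heq.1.symm hXneY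
              · by_cases hq3 : v = k₀
                · -- case 6
                  have hvp : Hmap k₀ k₁ x y = (Y, et y) := by
                    simp only [Hmap]; rw [if_neg hp1, if_pos hp2, if_neg hp3, if_pos hp4]
                  have hvq : Hmap k₀ k₁ u v = (et u, Y) := by
                    simp only [Hmap]; rw [if_neg hq1, if_neg hq2, if_pos hq3]
                  rw [hvp, hvq, Prod.mk.injEq] at heq
                  exact absurd heq.1.symm (hetnY _ hq1 hq2)
                · by_cases hq4 : v = k₁
                  · by_cases hq5 : (u : L) ≤ (k₀ : L)
                    · -- case 7
                      have hvp : Hmap k₀ k₁ x y = (Y, et y) := by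
                        simp only [Hmap]; rw [if_neg hp1, if_pos hp2, if_neg hp3, if_pos hp4]
                      have hvq : Hmap k₀ k₁ u v = (et u, X) := by
                        simp only [Hmap]; rw [if_neg hq1, if_neg hq2, if_neg hq3, if_pos hq4, if_pos hq5]
                      rw [hvp, hvq, Prod.mk.injEq] at heq
                      exact absurd heq.1.symm (hetnY _ hq1 hq2)
                    · -- case 8
                      have hvp : Hmap k₀ k₁ x y = (Y, et y) := by
                        simp only [Hmap]; rw [if_neg hp1, if_pos hp2, if_neg hp3, if_pos hp4]
                      have hvq : Hmap k₀ k₁ u v = (et u, Y) := by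
                        simp only [Hmap]; rw [if_neg hq1, if_neg hq2, if_neg hq3, if_pos hq4, if_neg hq5]
                      rw [hvp, hvq, Prod.mk.injEq] at heq
                      exact absurd heq.1.symm (hetnY _ hq1 hq2)
                  · -- case 9
                    have hvp : Hmap k₀ k₁ x y = (Y, et y) := by
                      simp only [Hmap]; rw [if_neg hp1, if_pos hp2, if_neg hp3, if_pos hp4]
                    have hvq : Hmap k₀ k₁ u v = (et u, et v) := by
                      simp only [Hmap]; rw [if_neg hq1, if_neg hq2, if_neg hq3, if_neg hq4]
                    rw [hvp, hvq, Prod.mk.injEq] at heq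
                    exact absurd heq.1.symm (hetnY _ hq1 hq2)
          · -- case 5
            by_cases hq1 : u = k₀
            · by_cases hq2 : v = k₀
              · -- case 1
                have hvp : Hmap k₀ k₁ x y = (X, et y) := by
                  simp only [Hmap]; rw [if_neg hp1, if_pos hp2, if_neg hp3, if_neg hp4]
                have hvq : Hmap k₀ k₁ u v = (X, X) := by
                  simp only [Hmap]; rw [if_pos hq1, if_pos hq2]
                rw [hvp, hvq, Prod.mk.injEq] at heq
                exact absurd heq.2 (hetnX _ hpy0 hp3)
              · have hqy1 : ¬ v = k₁ := fun hcon => h01 (by rw [hq1, hcon] at huv; exact huv)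
                have hvp : Hmap k₀ k₁ x y = (X, et y) := by
                  simp only [Hmap]; rw [if_neg hp1, if_pos hp2, if_neg hp3, if_neg hp4]
                have hvq : Hmap k₀ k₁ u v = (X, et v) := by
                  simp only [Hmap]; rw [if_pos hq1, if_neg hq2]
                rw [hvp, hvq, Prod.mk.injEq] at heq
                have exy := hetinj _ _ hpy0 hp3 hq2 hqy1 heq.2
                have hk0v : (k₀ : L) ≤ (v : L) := by rw [← hq1]; exact huv
                rw [← exy] at hk0v
                exact absurd hk0v hp4
            · by_cases hq2 : u = k₁
              · by_cases hq3 : v = k₁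
                · -- case 3
                  have hvp : Hmap k₀ k₁ x y = (X, et y) := by
                    simp only [Hmap]; rw [if_neg hp1, if_pos hp2, if_neg hp3, if_neg hp4]
                  have hvq : Hmap k₀ k₁ u v = (Y, Y) := by
                    simp only [Hmap]; rw [if_neg hq1, if_pos hq2, if_pos hq3]
                  rw [hvp, hvq, Prod.mk.injEq] at heq
                  exact absurd heq.1 hXneY
                · have hqy0 : ¬ v = k₀ := fun hcon => h10 (by rw [hq2, hcon] at huv; exact huv)
                  by_cases hq4 : (k₀ : L) ≤ (v : L)
                  · -- case 4
                    have hvp : Hmap k₀ k₁ x y = (X, et y) := by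
                      simp only [Hmap]; rw [if_neg hp1, if_pos hp2, if_neg hp3, if_neg hp4]
                    have hvq : Hmap k₀ k₁ u v = (Y, et v) := by
                      simp only [Hmap]; rw [if_neg hq1, if_pos hq2, if_neg hq3, if_pos hq4]
                    rw [hvp, hvq, Prod.mk.injEq] at heq
                    exact absurd heq.1 hXneY
                  · -- case 5
                    have hvp : Hmap k₀ k₁ x y = (X, et y) := by
                      simp only [Hmap]; rw [if_neg hp1, if_pos hp2, if_neg hp3, if_neg hp4]
                    have hvq : Hmap k₀ k₁ u v = (X, et v) := by
                      simp only [Hmap]; rw [if_neg hq1, if_pos hq2, if_neg hq3, if_neg hq4]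
                    rw [hvp, hvq, Prod.mk.injEq] at heq
                    rw [Prod.mk.injEq]
                    exact ⟨hp2.trans hq2.symm, hetinj _ _ hpy0 hp3 hqy0 hq3 heq.2⟩
              · by_cases hq3 : v = k₀
                · -- case 6
                  have hvp : Hmap k₀ k₁ x y = (X, et y) := by
                    simp only [Hmap]; rw [if_neg hp1, if_pos hp2, if_neg hp3, if_neg hp4]
                  have hvq : Hmap k₀ k₁ u v = (et u, Y) := by
                    simp only [Hmap]; rw [if_neg hq1, if_neg hq2, if_pos hq3]
                  rw [hvp, hvq, Prod.mk.injEq] at heq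
                  exact absurd heq.1.symm (hetnX _ hq1 hq2)
                · by_cases hq4 : v = k₁
                  · by_cases hq5 : (u : L) ≤ (k₀ : L)
                    · -- case 7
                      have hvp : Hmap k₀ k₁ x y = (X, et y) := by
                        simp only [Hmap]; rw [if_neg hp1, if_pos hp2, if_neg hp3, if_neg hp4]
                      have hvq : Hmap k₀ k₁ u v = (et u, X) := by
                        simp only [Hmap]; rw [if_neg hq1, if_neg hq2, if_neg hq3, if_pos hq4, if_pos hq5]
                      rw [hvp, hvq, Prod.mk.injEq] at heq
                      exact absurd heq.1.symm (hetnX _ hq1 hq2)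
                    · -- case 8
                      have hvp : Hmap k₀ k₁ x y = (X, et y) := by
                        simp only [Hmap]; rw [if_neg hp1, if_pos hp2, if_neg hp3, if_neg hp4]
                      have hvq : Hmap k₀ k₁ u v = (et u, Y) := by
                        simp only [Hmap]; rw [if_neg hq1, if_neg hq2, if_neg hq3, if_pos hq4, if_neg hq5]
                      rw [hvp, hvq, Prod.mk.injEq] at heq
                      exact absurd heq.1.symm (hetnX _ hq1 hq2)
                  · -- case 9
                    have hvp : Hmap k₀ k₁ x y = (X, et y) := by
                      simp only [Hmap]; rw [if_neg hp1, if_pos hp2, if_neg hp3, if_neg hp4]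
                    have hvq : Hmap k₀ k₁ u v = (et u, et v) := by
                      simp only [Hmap]; rw [if_neg hq1, if_neg hq2, if_neg hq3, if_neg hq4]
                    rw [hvp, hvq, Prod.mk.injEq] at heq
                    exact absurd heq.1.symm (hetnX _ hq1 hq2)
      · by_cases hp3 : y = k₀
        · -- case 6
          by_cases hq1 : u = k₀
          · by_cases hq2 : v = k₀
            · -- case 1
              have hvp : Hmap k₀ k₁ x y = (et x, Y) := by
                simp only [Hmap]; rw [if_neg hp1, if_neg hp2, if_pos hp3]
              have hvq : Hmap k₀ k₁ u v = (X, X) := by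
                simp only [Hmap]; rw [if_pos hq1, if_pos hq2]
              rw [hvp, hvq, Prod.mk.injEq] at heq
              exact absurd heq.1 (hetnX _ hp1 hp2)
            · have hqy1 : ¬ v = k₁ := fun hcon => h01 (by rw [hq1, hcon] at huv; exact huv)
              have hvp : Hmap k₀ k₁ x y = (et x, Y) := by
                simp only [Hmap]; rw [if_neg hp1, if_neg hp2, if_pos hp3]
              have hvq : Hmap k₀ k₁ u v = (X, et v) := by
                simp only [Hmap]; rw [if_pos hq1, if_neg hq2]
              rw [hvp, hvq, Prod.mk.injEq] at heq
              exact absurd heq.1 (hetnX _ hp1 hp2)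
          · by_cases hq2 : u = k₁
            · by_cases hq3 : v = k₁
              · -- case 3
                have hvp : Hmap k₀ k₁ x y = (et x, Y) := by
                  simp only [Hmap]; rw [if_neg hp1, if_neg hp2, if_pos hp3]
                have hvq : Hmap k₀ k₁ u v = (Y, Y) := by
                  simp only [Hmap]; rw [if_neg hq1, if_pos hq2, if_pos hq3]
                rw [hvp, hvq, Prod.mk.injEq] at heq
                exact absurd heq.1 (hetnY _ hp1 hp2)
              · have hqy0 : ¬ v = k₀ := fun hcon => h10 (by rw [hq2, hcon] at huv; exact huv)
                by_cases hq4 : (k₀ : L) ≤ (v : L)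
                · -- case 4
                  have hvp : Hmap k₀ k₁ x y = (et x, Y) := by
                    simp only [Hmap]; rw [if_neg hp1, if_neg hp2, if_pos hp3]
                  have hvq : Hmap k₀ k₁ u v = (Y, et v) := by
                    simp only [Hmap]; rw [if_neg hq1, if_pos hq2, if_neg hq3, if_pos hq4]
                  rw [hvp, hvq, Prod.mk.injEq] at heq
                  exact absurd heq.1 (hetnY _ hp1 hp2)
                · -- case 5
                  have hvp : Hmap k₀ k₁ x y = (et x, Y) := by
                    simp only [Hmap]; rw [if_neg hp1, if_neg hp2, if_pos hp3]
                  have hvq : Hmap k₀ k₁ u v = (X, et v) := by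
                    simp only [Hmap]; rw [if_neg hq1, if_pos hq2, if_neg hq3, if_neg hq4]
                  rw [hvp, hvq, Prod.mk.injEq] at heq
                  exact absurd heq.1 (hetnX _ hp1 hp2)
            · by_cases hq3 : v = k₀
              · -- case 6
                have hvp : Hmap k₀ k₁ x y = (et x, Y) := by
                  simp only [Hmap]; rw [if_neg hp1, if_neg hp2, if_pos hp3]
                have hvq : Hmap k₀ k₁ u v = (et u, Y) := by
                  simp only [Hmap]; rw [if_neg hq1, if_neg hq2, if_pos hq3]
                rw [hvp, hvq, Prod.mk.injEq] at heq
                rw [Prod.mk.injEq]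
                exact ⟨hetinj _ _ hp1 hp2 hq1 hq2 heq.1, hp3.trans hq3.symm⟩
              · by_cases hq4 : v = k₁
                · by_cases hq5 : (u : L) ≤ (k₀ : L)
                  · -- case 7
                    have hvp : Hmap k₀ k₁ x y = (et x, Y) := by
                      simp only [Hmap]; rw [if_neg hp1, if_neg hp2, if_pos hp3]
                    have hvq : Hmap k₀ k₁ u v = (et u, X) := by
                      simp only [Hmap]; rw [if_neg hq1, if_neg hq2, if_neg hq3, if_pos hq4, if_pos hq5]
                    rw [hvp, hvq, Prod.mk.injEq] at heq
                    exact absurd heq.2.symm hXneY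
                  · -- case 8
                    have hvp : Hmap k₀ k₁ x y = (et x, Y) := by
                      simp only [Hmap]; rw [if_neg hp1, if_neg hp2, if_pos hp3]
                    have hvq : Hmap k₀ k₁ u v = (et u, Y) := by
                      simp only [Hmap]; rw [if_neg hq1, if_neg hq2, if_neg hq3, if_pos hq4, if_neg hq5]
                    rw [hvp, hvq, Prod.mk.injEq] at heq
                    have exu := hetinj _ _ hp1 hp2 hq1 hq2 heq.1
                    have hxk0 : (x : L) ≤ (k₀ : L) := by rw [← hp3]; exact hxy
                    rw [exu] at hxk0
                    exact absurd hxk0 hq5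
                · -- case 9
                  have hvp : Hmap k₀ k₁ x y = (et x, Y) := by
                    simp only [Hmap]; rw [if_neg hp1, if_neg hp2, if_pos hp3]
                  have hvq : Hmap k₀ k₁ u v = (et u, et v) := by
                    simp only [Hmap]; rw [if_neg hq1, if_neg hq2, if_neg hq3, if_neg hq4]
                  rw [hvp, hvq, Prod.mk.injEq] at heq
                  exact absurd heq.2.symm (hetnY _ hq3 hq4)
        · by_cases hp4 : y = k₁
          · by_cases hp5 : (x : L) ≤ (k₀ : L)
            · -- case 7
              by_cases hq1 : u = k₀
              · by_cases hq2 : v = k₀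
                · -- case 1
                  have hvp : Hmap k₀ k₁ x y = (et x, X) := by
                    simp only [Hmap]; rw [if_neg hp1, if_neg hp2, if_neg hp3, if_pos hp4, if_pos hp5]
                  have hvq : Hmap k₀ k₁ u v = (X, X) := by
                    simp only [Hmap]; rw [if_pos hq1, if_pos hq2]
                  rw [hvp, hvq, Prod.mk.injEq] at heq
                  exact absurd heq.1 (hetnX _ hp1 hp2)
                · have hqy1 : ¬ v = k₁ := fun hcon => h01 (by rw [hq1, hcon] at huv; exact huv)
                  have hvp : Hmap k₀ k₁ x y = (et x, X) := by
                    simp only [Hmap]; rw [if_neg hp1, if_neg hp2, if_neg hp3, if_pos hp4, if_pos hp5]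
                  have hvq : Hmap k₀ k₁ u v = (X, et v) := by
                    simp only [Hmap]; rw [if_pos hq1, if_neg hq2]
                  rw [hvp, hvq, Prod.mk.injEq] at heq
                  exact absurd heq.1 (hetnX _ hp1 hp2)
              · by_cases hq2 : u = k₁
                · by_cases hq3 : v = k₁
                  · -- case 3
                    have hvp : Hmap k₀ k₁ x y = (et x, X) := by
                      simp only [Hmap]; rw [if_neg hp1, if_neg hp2, if_neg hp3, if_pos hp4, if_pos hp5]
                    have hvq : Hmap k₀ k₁ u v = (Y, Y) := by
                      simp only [Hmap]; rw [if_neg hq1, if_pos hq2, if_pos hq3]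
                    rw [hvp, hvq, Prod.mk.injEq] at heq
                    exact absurd heq.1 (hetnY _ hp1 hp2)
                  · have hqy0 : ¬ v = k₀ := fun hcon => h10 (by rw [hq2, hcon] at huv; exact huv)
                    by_cases hq4 : (k₀ : L) ≤ (v : L)
                    · -- case 4
                      have hvp : Hmap k₀ k₁ x y = (et x, X) := by
                        simp only [Hmap]; rw [if_neg hp1, if_neg hp2, if_neg hp3, if_pos hp4, if_pos hp5]
                      have hvq : Hmap k₀ k₁ u v = (Y, et v) := by
                        simp only [Hmap]; rw [if_neg hq1, if_pos hq2, if_neg hq3, if_pos hq4]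
                      rw [hvp, hvq, Prod.mk.injEq] at heq
                      exact absurd heq.1 (hetnY _ hp1 hp2)
                    · -- case 5
                      have hvp : Hmap k₀ k₁ x y = (et x, X) := by
                        simp only [Hmap]; rw [if_neg hp1, if_neg hp2, if_neg hp3, if_pos hp4, if_pos hp5]
                      have hvq : Hmap k₀ k₁ u v = (X, et v) := by
                        simp only [Hmap]; rw [if_neg hq1, if_pos hq2, if_neg hq3, if_neg hq4]
                      rw [hvp, hvq, Prod.mk.injEq] at heq
                      exact absurd heq.1 (hetnX _ hp1 hp2)
                · by_cases hq3 : v = k₀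
                  · -- case 6
                    have hvp : Hmap k₀ k₁ x y = (et x, X) := by
                      simp only [Hmap]; rw [if_neg hp1, if_neg hp2, if_neg hp3, if_pos hp4, if_pos hp5]
                    have hvq : Hmap k₀ k₁ u v = (et u, Y) := by
                      simp only [Hmap]; rw [if_neg hq1, if_neg hq2, if_pos hq3]
                    rw [hvp, hvq, Prod.mk.injEq] at heq
                    exact absurd heq.2 hXneY
                  · by_cases hq4 : v = k₁
                    · by_cases hq5 : (u : L) ≤ (k₀ : L)
                      · -- case 7
                        have hvp : Hmap k₀ k₁ x y = (et x, X) := by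
                          simp only [Hmap]; rw [if_neg hp1, if_neg hp2, if_neg hp3, if_pos hp4, if_pos hp5]
                        have hvq : Hmap k₀ k₁ u v = (et u, X) := by
                          simp only [Hmap]; rw [if_neg hq1, if_neg hq2, if_neg hq3, if_pos hq4, if_pos hq5]
                        rw [hvp, hvq, Prod.mk.injEq] at heq
                        rw [Prod.mk.injEq]
                        exact ⟨hetinj _ _ hp1 hp2 hq1 hq2 heq.1, hp4.trans hq4.symm⟩
                      · -- case 8
                        have hvp : Hmap k₀ k₁ x y = (et x, X) := by
                          simp only [Hmap]; rw [if_neg hp1, if_neg hp2, if_neg hp3, if_pos hp4, if_pos hp5]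
                        have hvq : Hmap k₀ k₁ u v = (et u, Y) := by
                          simp only [Hmap]; rw [if_neg hq1, if_neg hq2, if_neg hq3, if_pos hq4, if_neg hq5]
                        rw [hvp, hvq, Prod.mk.injEq] at heq
                        exact absurd heq.2 hXneY
                    · -- case 9
                      have hvp : Hmap k₀ k₁ x y = (et x, X) := by
                        simp only [Hmap]; rw [if_neg hp1, if_neg hp2, if_neg hp3, if_pos hp4, if_pos hp5]
                      have hvq : Hmap k₀ k₁ u v = (et u, et v) := by
                        simp only [Hmap]; rw [if_neg hq1, if_neg hq2, if_neg hq3, if_neg hq4]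
                      rw [hvp, hvq, Prod.mk.injEq] at heq
                      exact absurd heq.2.symm (hetnX _ hq3 hq4)
            · -- case 8
              by_cases hq1 : u = k₀
              · by_cases hq2 : v = k₀
                · -- case 1
                  have hvp : Hmap k₀ k₁ x y = (et x, Y) := by
                    simp only [Hmap]; rw [if_neg hp1, if_neg hp2, if_neg hp3, if_pos hp4, if_neg hp5]
                  have hvq : Hmap k₀ k₁ u v = (X, X) := by
                    simp only [Hmap]; rw [if_pos hq1, if_pos hq2]
                  rw [hvp, hvq, Prod.mk.injEq] at heq
                  exact absurd heq.1 (hetnX _ hp1 hp2)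
                · have hqy1 : ¬ v = k₁ := fun hcon => h01 (by rw [hq1, hcon] at huv; exact huv)
                  have hvp : Hmap k₀ k₁ x y = (et x, Y) := by
                    simp only [Hmap]; rw [if_neg hp1, if_neg hp2, if_neg hp3, if_pos hp4, if_neg hp5]
                  have hvq : Hmap k₀ k₁ u v = (X, et v) := by
                    simp only [Hmap]; rw [if_pos hq1, if_neg hq2]
                  rw [hvp, hvq, Prod.mk.injEq] at heq
                  exact absurd heq.1 (hetnX _ hp1 hp2)
              · by_cases hq2 : u = k₁
                · by_cases hq3 : v = k₁
                  · -- case 3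
                    have hvp : Hmap k₀ k₁ x y = (et x, Y) := by
                      simp only [Hmap]; rw [if_neg hp1, if_neg hp2, if_neg hp3, if_pos hp4, if_neg hp5]
                    have hvq : Hmap k₀ k₁ u v = (Y, Y) := by
                      simp only [Hmap]; rw [if_neg hq1, if_pos hq2, if_pos hq3]
                    rw [hvp, hvq, Prod.mk.injEq] at heq
                    exact absurd heq.1 (hetnY _ hp1 hp2)
                  · have hqy0 : ¬ v = k₀ := fun hcon => h10 (by rw [hq2, hcon] at huv; exact huv)
                    by_cases hq4 : (k₀ : L) ≤ (v : L)
                    · -- case 4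
                      have hvp : Hmap k₀ k₁ x y = (et x, Y) := by
                        simp only [Hmap]; rw [if_neg hp1, if_neg hp2, if_neg hp3, if_pos hp4, if_neg hp5]
                      have hvq : Hmap k₀ k₁ u v = (Y, et v) := by
                        simp only [Hmap]; rw [if_neg hq1, if_pos hq2, if_neg hq3, if_pos hq4]
                      rw [hvp, hvq, Prod.mk.injEq] at heq
                      exact absurd heq.1 (hetnY _ hp1 hp2)
                    · -- case 5
                      have hvp : Hmap k₀ k₁ x y = (et x, Y) := by
                        simp only [Hmap]; rw [if_neg hp1, if_neg hp2, if_neg hp3, if_pos hp4, if_neg hp5]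
                      have hvq : Hmap k₀ k₁ u v = (X, et v) := by
                        simp only [Hmap]; rw [if_neg hq1, if_pos hq2, if_neg hq3, if_neg hq4]
                      rw [hvp, hvq, Prod.mk.injEq] at heq
                      exact absurd heq.1 (hetnX _ hp1 hp2)
                · by_cases hq3 : v = k₀
                  · -- case 6
                    have hvp : Hmap k₀ k₁ x y = (et x, Y) := by
                      simp only [Hmap]; rw [if_neg hp1, if_neg hp2, if_neg hp3, if_pos hp4, if_neg hp5]
                    have hvq : Hmap k₀ k₁ u v = (et u, Y) := by
                      simp only [Hmap]; rw [if_neg hq1, if_neg hq2, if_pos hq3]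
                    rw [hvp, hvq, Prod.mk.injEq] at heq
                    have exu := hetinj _ _ hq1 hq2 hp1 hp2 heq.1.symm
                    have huk0 : (u : L) ≤ (k₀ : L) := by rw [← hq3]; exact huv
                    rw [exu] at huk0
                    exact absurd huk0 hp5
                  · by_cases hq4 : v = k₁
                    · by_cases hq5 : (u : L) ≤ (k₀ : L)
                      · -- case 7
                        have hvp : Hmap k₀ k₁ x y = (et x, Y) := by
                          simp only [Hmap]; rw [if_neg hp1, if_neg hp2, if_neg hp3, if_pos hp4, if_neg hp5]
                        have hvq : Hmap k₀ k₁ u v = (et u, X) := by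
                          simp only [Hmap]; rw [if_neg hq1, if_neg hq2, if_neg hq3, if_pos hq4, if_pos hq5]
                        rw [hvp, hvq, Prod.mk.injEq] at heq
                        exact absurd heq.2.symm hXneY
                      · -- case 8
                        have hvp : Hmap k₀ k₁ x y = (et x, Y) := by
                          simp only [Hmap]; rw [if_neg hp1, if_neg hp2, if_neg hp3, if_pos hp4, if_neg hp5]
                        have hvq : Hmap k₀ k₁ u v = (et u, Y) := by
                          simp only [Hmap]; rw [if_neg hq1, if_neg hq2, if_neg hq3, if_pos hq4, if_neg hq5]
                        rw [hvp, hvq, Prod.mk.injEq] at heq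
                        rw [Prod.mk.injEq]
                        exact ⟨hetinj _ _ hp1 hp2 hq1 hq2 heq.1, hp4.trans hq4.symm⟩
                    · -- case 9
                      have hvp : Hmap k₀ k₁ x y = (et x, Y) := by
                        simp only [Hmap]; rw [if_neg hp1, if_neg hp2, if_neg hp3, if_pos hp4, if_neg hp5]
                      have hvq : Hmap k₀ k₁ u v = (et u, et v) := by
                        simp only [Hmap]; rw [if_neg hq1, if_neg hq2, if_neg hq3, if_neg hq4]
                      rw [hvp, hvq, Prod.mk.injEq] at heq
                      exact absurd heq.2.symm (hetnY _ hq3 hq4)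
          · -- case 9
            by_cases hq1 : u = k₀
            · by_cases hq2 : v = k₀
              · -- case 1
                have hvp : Hmap k₀ k₁ x y = (et x, et y) := by
                  simp only [Hmap]; rw [if_neg hp1, if_neg hp2, if_neg hp3, if_neg hp4]
                have hvq : Hmap k₀ k₁ u v = (X, X) := by
                  simp only [Hmap]; rw [if_pos hq1, if_pos hq2]
                rw [hvp, hvq, Prod.mk.injEq] at heq
                exact absurd heq.1 (hetnX _ hp1 hp2)
              · have hqy1 : ¬ v = k₁ := fun hcon => h01 (by rw [hq1, hcon] at huv; exact huv)
                have hvp : Hmap k₀ k₁ x y = (et x, et y) := by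
                  simp only [Hmap]; rw [if_neg hp1, if_neg hp2, if_neg hp3, if_neg hp4]
                have hvq : Hmap k₀ k₁ u v = (X, et v) := by
                  simp only [Hmap]; rw [if_pos hq1, if_neg hq2]
                rw [hvp, hvq, Prod.mk.injEq] at heq
                exact absurd heq.1 (hetnX _ hp1 hp2)
            · by_cases hq2 : u = k₁
              · by_cases hq3 : v = k₁
                · -- case 3
                  have hvp : Hmap k₀ k₁ x y = (et x, et y) := by
                    simp only [Hmap]; rw [if_neg hp1, if_neg hp2, if_neg hp3, if_neg hp4]
                  have hvq : Hmap k₀ k₁ u v = (Y, Y) := by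
                    simp only [Hmap]; rw [if_neg hq1, if_pos hq2, if_pos hq3]
                  rw [hvp, hvq, Prod.mk.injEq] at heq
                  exact absurd heq.1 (hetnY _ hp1 hp2)
                · have hqy0 : ¬ v = k₀ := fun hcon => h10 (by rw [hq2, hcon] at huv; exact huv)
                  by_cases hq4 : (k₀ : L) ≤ (v : L)
                  · -- case 4
                    have hvp : Hmap k₀ k₁ x y = (et x, et y) := by
                      simp only [Hmap]; rw [if_neg hp1, if_neg hp2, if_neg hp3, if_neg hp4]
                    have hvq : Hmap k₀ k₁ u v = (Y, et v) := by
                      simp only [Hmap]; rw [if_neg hq1, if_pos hq2, if_neg hq3, if_pos hq4]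
                    rw [hvp, hvq, Prod.mk.injEq] at heq
                    exact absurd heq.1 (hetnY _ hp1 hp2)
                  · -- case 5
                    have hvp : Hmap k₀ k₁ x y = (et x, et y) := by
                      simp only [Hmap]; rw [if_neg hp1, if_neg hp2, if_neg hp3, if_neg hp4]
                    have hvq : Hmap k₀ k₁ u v = (X, et v) := by
                      simp only [Hmap]; rw [if_neg hq1, if_pos hq2, if_neg hq3, if_neg hq4]
                    rw [hvp, hvq, Prod.mk.injEq] at heq
                    exact absurd heq.1 (hetnX _ hp1 hp2)
              · by_cases hq3 : v = k₀
                · -- case 6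
                  have hvp : Hmap k₀ k₁ x y = (et x, et y) := by
                    simp only [Hmap]; rw [if_neg hp1, if_neg hp2, if_neg hp3, if_neg hp4]
                  have hvq : Hmap k₀ k₁ u v = (et u, Y) := by
                    simp only [Hmap]; rw [if_neg hq1, if_neg hq2, if_pos hq3]
                  rw [hvp, hvq, Prod.mk.injEq] at heq
                  exact absurd heq.2 (hetnY _ hp3 hp4)
                · by_cases hq4 : v = k₁
                  · by_cases hq5 : (u : L) ≤ (k₀ : L)
                    · -- case 7
                      have hvp : Hmap k₀ k₁ x y = (et x, et y) := by
                        simp only [Hmap]; rw [if_neg hp1, if_neg hp2, if_neg hp3, if_neg hp4]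
                      have hvq : Hmap k₀ k₁ u v = (et u, X) := by
                        simp only [Hmap]; rw [if_neg hq1, if_neg hq2, if_neg hq3, if_pos hq4, if_pos hq5]
                      rw [hvp, hvq, Prod.mk.injEq] at heq
                      exact absurd heq.2 (hetnX _ hp3 hp4)
                    · -- case 8
                      have hvp : Hmap k₀ k₁ x y = (et x, et y) := by
                        simp only [Hmap]; rw [if_neg hp1, if_neg hp2, if_neg hp3, if_neg hp4]
                      have hvq : Hmap k₀ k₁ u v = (et u, Y) := by
                        simp only [Hmap]; rw [if_neg hq1, if_neg hq2, if_neg hq3, if_pos hq4, if_neg hq5]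
                      rw [hvp, hvq, Prod.mk.injEq] at heq
                      exact absurd heq.2 (hetnY _ hp3 hp4)
                  · -- case 9
                    have hvp : Hmap k₀ k₁ x y = (et x, et y) := by
                      simp only [Hmap]; rw [if_neg hp1, if_neg hp2, if_neg hp3, if_neg hp4]
                    have hvq : Hmap k₀ k₁ u v = (et u, et v) := by
                      simp only [Hmap]; rw [if_neg hq1, if_neg hq2, if_neg hq3, if_neg hq4]
                    rw [hvp, hvq, Prod.mk.injEq] at heq
                    rw [Prod.mk.injEq]
                    exact ⟨hetinj _ _ hp1 hp2 hq1 hq2 heq.1, hetinj _ _ hp3 hp4 hq3 hq4 heq.2⟩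
  have himgsub : PL.image (fun p : ↥(MeetIrred L) × ↥(MeetIrred L) => Hmap k₀ k₁ p.1 p.2) ⊆ PM :=
    Finset.image_subset_iff.2 hmaps
  have hXYPM : ((X, Y) : (↥(MeetIrred L) → ℕ) × (↥(MeetIrred L) → ℕ)) ∈ PM :=
    Finset.mem_filter.2 ⟨Finset.mem_product.2 ⟨hXmem, hYmem⟩, hX_le_Y⟩
  have hXYnot : ((X, Y) : (↥(MeetIrred L) → ℕ) × (↥(MeetIrred L) → ℕ)) ∉
      PL.image (fun p : ↥(MeetIrred L) × ↥(MeetIrred L) => Hmap k₀ k₁ p.1 p.2) := by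
    intro hcon
    obtain ⟨p, hp, hpe⟩ := Finset.mem_image.1 hcon
    exact hnotXY p hp hpe
  have hss : PL.image (fun p : ↥(MeetIrred L) × ↥(MeetIrred L) => Hmap k₀ k₁ p.1 p.2) ⊂ PM :=
    (Finset.ssubset_iff_of_subset himgsub).2 ⟨(X, Y), hXYPM, hXYnot⟩
  have hlt2 : PL.card < PM.card := by
    have h1 : (PL.image (fun p : ↥(MeetIrred L) × ↥(MeetIrred L) => Hmap k₀ k₁ p.1 p.2)).card
        = PL.card := Finset.card_image_iff.2 hinjH
    have h2 := Finset.card_lt_card hss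
    omega
  omega

end Main

end Stmt19Aux

/-- Let `k₀ ≠ k₁` be meet-irreducible elements of the finite atomic lattice
`L̂` and let `M̄` be the image of `M(L)` in `k[L]/(x_{k₁} − x_{k₀})`.  Then
`LCM(M̄) ≅ L̂` if and only if `k₀` and `k₁` are comparable. -/
theorem stmt19 {L : Type*} [CompleteLattice L] [Fintype L] [IsAtomistic L]
    (k₀ k₁ : ↥(MeetIrred L)) (hne : k₀ ≠ k₁) :
    Nonempty (L ≃o
        ↥{w : ↥(MeetIrred L) → ℕ | ∃ T : Finset L, (∀ a ∈ T, IsAtom a) ∧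
          w = T.sup (mergeExpo k₀ k₁)}) ↔
      ((k₀ : L) ≤ k₁ ∨ (k₁ : L) ≤ k₀) := by
  constructor
  · rintro ⟨θ⟩
    by_contra hcmp
    push_neg at hcmp
    exact Stmt19Aux.backward k₀ k₁ hne hcmp.1 hcmp.2 θ
  · intro hcmp
    exact Stmt19Aux.forward k₀ k₁ hne hcmp

end
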